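/- arXiv:2507.07777 — 4 statements merged into one kernel-verified Lean document; each statement's English description precedes it below -/
import Mathlib

section
/- Let a ∈ 𝒜 and let n be a positive integer. Then a has a generalized core-EP inverse if and only if (1) a has a g-Drazin inverse, and (2) there exists p ∈ 𝒜 with p² = p = p* such that pa = pap, pa is quasinilpotent, and aⁿ + p is invertible in 𝒜. -/
open Filter

/-- `y` is quasinilpotent: `‖yⁿ‖^{1/n} → 0`. -/
def IsQuasinilpotent {R : Type*} [NormedRing R] (y : R) : Prop :=
  Filter.Tendsto (fun n : ℕ => ‖y ^ n‖ ^ (1 / (n : ℝ))) Filter.atTop (nhds 0)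

/-- `y` is `w`-quasinilpotent: `‖(yw)ⁿ‖^{1/n} → 0`. -/
def IsWQuasinilpotent {R : Type*} [NormedRing R] (w y : R) : Prop :=
  Filter.Tendsto (fun n : ℕ => ‖(y * w) ^ n‖ ^ (1 / (n : ℝ))) Filter.atTop (nhds 0)

/-- `x` is a `w`-weighted core inverse of `a`. -/
def IsWCoreInv {R : Type*} [NormedRing R] [StarRing R] (w a x : R) : Prop :=
  a * (w * x) ^ 2 = x ∧ star (w * a * w * x) = w * a * w * x ∧ x * w * (a * w) ^ 2 = a * w

/-- `x` is a generalized `w`-weighted core-EP inverse of `a`. -/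
def IsWCoreEPInv {R : Type*} [NormedRing R] [StarRing R] (w a x : R) : Prop :=
  a * (w * x) ^ 2 = x ∧ star (w * a * w * x) = w * a * w * x ∧
    Filter.Tendsto (fun n : ℕ => ‖(a * w) ^ n - x * w * (a * w) ^ (n + 1)‖ ^ (1 / (n : ℝ)))
      Filter.atTop (nhds 0)

/-- `g` is a group inverse of `b`. -/
def IsGroupInv {R : Type*} [Ring R] (b g : R) : Prop :=
  b * g * b = b ∧ g * b * g = g ∧ b * g = g * b

/-- `u` is a (1,3)-inverse of `b`. -/
def Is13Inv {R : Type*} [Ring R] [StarRing R] (b u : R) : Prop :=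
  b * u * b = b ∧ star (b * u) = b * u

/-- `x` is a `(b,c)`-inverse of `a`. -/
def IsBCInv {R : Type*} [Ring R] (b c a x : R) : Prop :=
  x * a * b = b ∧ c * a * x = c ∧ (∃ s, x = b * s * x) ∧ (∃ t, x = x * t * c)

/-- `x` is a g-Drazin inverse of `b`. -/
def IsGDrazinInv {R : Type*} [NormedRing R] (b x : R) : Prop :=
  b * x = x * b ∧ x * b * x = x ∧ IsQuasinilpotent (b - b ^ 2 * x)

/-- `x` is a `w`-weighted g-Drazin inverse of `a`. -/
def IsWGDrazinInv {R : Type*} [NormedRing R] (w a x : R) : Prop :=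
  a * w * x = x * w * a ∧ x * w * a * w * x = x ∧
    IsWQuasinilpotent w (a - a * w * x * w * a)

/-- `x` is a core inverse of `a`. -/
def IsCoreInv {R : Type*} [Ring R] [StarRing R] (a x : R) : Prop :=
  a * x ^ 2 = x ∧ star (a * x) = a * x ∧ x * a ^ 2 = a

/-- `x` is a generalized core-EP inverse of `a`. -/
def IsCoreEPInv {R : Type*} [NormedRing R] [StarRing R] (a x : R) : Prop :=
  a * x ^ 2 = x ∧ star (a * x) = a * x ∧
    Filter.Tendsto (fun n : ℕ => ‖a ^ n - x * a ^ (n + 1)‖ ^ (1 / (n : ℝ)))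
      Filter.atTop (nhds 0)

/-- `x` is a pseudo core (core-EP) inverse of `a`. -/
def IsPseudoCoreInv {R : Type*} [Ring R] [StarRing R] (a x : R) : Prop :=
  a * x ^ 2 = x ∧ star (a * x) = a * x ∧ ∃ k : ℕ, 0 < k ∧ x * a ^ (k + 1) = a ^ k

/-- `u` is a `(1,3,w)`-inverse of `b`. -/
def Is13wInv {R : Type*} [Ring R] [StarRing R] (w b u : R) : Prop :=
  b = b * w * u * w * b ∧ star (w * b * w * u) = w * b * w * u

variable {A : Type*} [NormedRing A] [NormedAlgebra ℂ A] [StarRing A] [StarModule ℂ A]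
  [CompleteSpace A]


section Helpers

variable {R : Type*} [NormedRing R]

private def SD (f : ℕ → R) : Prop :=
  ∀ ε : ℝ, 0 < ε → ∀ᶠ k in atTop, ‖f k‖ ≤ ε ^ k

private theorem sd_iff (f : ℕ → R) :
    Filter.Tendsto (fun k : ℕ => ‖f k‖ ^ (1 / (k : ℝ))) Filter.atTop (nhds 0) ↔ SD f := by
  constructor
  · intro h ε hε
    filter_upwards [h.eventually_lt_const hε, eventually_ge_atTop 1] with k hk hk1
    have hk0 : k ≠ 0 := by omega
    have h0 : (0:ℝ) ≤ ‖f k‖ := norm_nonneg _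
    calc ‖f k‖ = (‖f k‖ ^ ((k : ℝ)⁻¹)) ^ k := (Real.rpow_inv_natCast_pow h0 hk0).symm
    _ ≤ ε ^ k := by
        apply pow_le_pow_left₀ (Real.rpow_nonneg h0 _)
        rw [one_div] at hk
        exact hk.le
  · intro h
    rw [Metric.tendsto_atTop]
    intro ε hε
    obtain ⟨N, hN⟩ := eventually_atTop.1 (h (ε/2) (by positivity))
    refine ⟨N + 1, fun k hk => ?_⟩
    have hk0 : k ≠ 0 := by omega
    have h0 : (0:ℝ) ≤ ‖f k‖ := norm_nonneg _
    have hle : ‖f k‖ ^ (1/(k:ℝ)) ≤ ε/2 := by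
      rw [one_div]
      calc ‖f k‖ ^ ((k:ℝ)⁻¹) ≤ ((ε/2) ^ k) ^ ((k:ℝ)⁻¹) :=
        Real.rpow_le_rpow h0 (hN k (by omega)) (by positivity)
      _ = ε/2 := Real.pow_rpow_inv_natCast (by positivity) hk0
    have hnn : 0 ≤ ‖f k‖ ^ (1/(k:ℝ)) := Real.rpow_nonneg h0 _
    rw [Real.dist_eq, sub_zero, abs_of_nonneg hnn]
    linarith

private theorem sd_shift (f g : ℕ → R) (C : ℝ) (hC : 0 ≤ C) (hf : SD f)
    (h : ∀ k, ‖g (k + 1)‖ ≤ C * ‖f k‖) : SD g := by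
  intro ε hε
  have hgeo : Tendsto (fun k : ℕ => C * (1/2:ℝ)^k) atTop (nhds 0) := by
    simpa using (tendsto_pow_atTop_nhds_zero_of_lt_one (by norm_num)
      (by norm_num : (1/2:ℝ) < 1)).const_mul C
  obtain ⟨N, hN⟩ := eventually_atTop.1 ((hf (ε/2) (by positivity)).and
    (hgeo.eventually_le_const hε))
  rw [eventually_atTop]
  refine ⟨N + 1, fun j hj => ?_⟩
  obtain ⟨k, rfl⟩ : ∃ k, j = k + 1 := ⟨j - 1, by omega⟩
  obtain ⟨h1, h2⟩ := hN k (by omega)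
  calc ‖g (k+1)‖ ≤ C * ‖f k‖ := h k
  _ ≤ C * (ε/2)^k := mul_le_mul_of_nonneg_left h1 hC
  _ = (C * (1/2)^k) * ε^k := by ring
  _ ≤ ε * ε^k := mul_le_mul_of_nonneg_right h2 (pow_nonneg hε.le k)
  _ = ε^(k+1) := (pow_succ' ε k).symm

private theorem eq_zero_of_bound (c : R) (B : ℝ) (hB : 0 ≤ B)
    (h : ∀ ε : ℝ, 0 < ε → ∀ᶠ k in atTop, ‖c‖ ≤ ε ^ k * B ^ k) : c = 0 := by
  have hε : (0:ℝ) < (2*(B+1))⁻¹ := by positivity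
  have hhalf : (2*(B+1))⁻¹ * B ≤ 1/2 := by
    have ht : ((2*(B+1))⁻¹) * (2*(B+1)) = 1 := inv_mul_cancel₀ (by positivity)
    have htn : 0 ≤ (2*(B+1))⁻¹ := by positivity
    nlinarith
  have h2 : ∀ᶠ k in atTop, ‖c‖ ≤ (1/2:ℝ)^k := by
    filter_upwards [h _ hε] with k hk
    calc ‖c‖ ≤ ((2*(B+1))⁻¹)^k * B^k := hk
    _ = ((2*(B+1))⁻¹ * B)^k := (mul_pow _ _ _).symm
    _ ≤ (1/2:ℝ)^k := pow_le_pow_left₀ (by positivity) hhalf k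
  have hle : ‖c‖ ≤ 0 :=
    ge_of_tendsto (tendsto_pow_atTop_nhds_zero_of_lt_one (by norm_num)
      (by norm_num : (1/2:ℝ) < 1)) h2
  exact norm_le_zero_iff.mp hle

private theorem summable_of_sd [CompleteSpace R] (f g : ℕ → R) (C D : ℝ) (hC : 0 ≤ C)
    (hD : 0 ≤ D) (hg : SD g) (h : ∀ k, ‖f k‖ ≤ C * (D ^ k * ‖g k‖)) : Summable f := by
  have hδ : (0:ℝ) < (2*(D+1))⁻¹ := by positivity
  have hhalf : D * (2*(D+1))⁻¹ ≤ 1/2 := by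
    have ht : ((2*(D+1))⁻¹) * (2*(D+1)) = 1 := inv_mul_cancel₀ (by positivity)
    have htn : 0 ≤ (2*(D+1))⁻¹ := by positivity
    nlinarith
  apply Summable.of_norm_bounded_eventually (g := fun k => C * (1/2:ℝ)^k)
    ((summable_geometric_of_lt_one (by norm_num) (by norm_num)).mul_left C)
  rw [Nat.cofinite_eq_atTop]
  filter_upwards [hg _ hδ] with k hk
  calc ‖f k‖ ≤ C * (D^k * ‖g k‖) := h k
  _ ≤ C * (D^k * ((2*(D+1))⁻¹)^k) := by
      apply mul_le_mul_of_nonneg_left (mul_le_mul_of_nonneg_left hk (by positivity)) hC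
  _ = C * ((D * (2*(D+1))⁻¹)^k) := by rw [← mul_pow]
  _ ≤ C * (1/2:ℝ)^k := by
      apply mul_le_mul_of_nonneg_left (pow_le_pow_left₀ (by positivity) hhalf k) hC

private theorem isUnit_one_add_of_pow [CompleteSpace R] (y : R) (m : ℕ) (hm : 1 ≤ m)
    (h : ‖y ^ m‖ < 1) : IsUnit (1 + y) := by
  have hd : ‖(-y) ^ m‖ < 1 := by
    rcases Nat.even_or_odd m with he | ho
    · rwa [he.neg_pow]
    · rwa [ho.neg_pow, norm_neg]
  have hvu : IsUnit (1 - (-y)^m) := isUnit_one_sub_of_norm_lt_one hd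
  set v : R := ((hvu.unit⁻¹ : Rˣ) : R) with hv
  have hv1 : (1 - (-y)^m) * v = 1 := hvu.mul_val_inv
  have hv2 : v * (1 - (-y)^m) = 1 := hvu.val_inv_mul
  have hcomm : Commute (1 - -y) ((hvu.unit : Rˣ) : R) := by
    rw [hvu.unit_spec]
    have h2 : Commute (-y) (1 - (-y)^m) :=
      (Commute.one_right (-y)).sub_right ((Commute.refl (-y)).pow_right m)
    exact (Commute.one_left _).sub_left h2
  have hcinv : Commute (1 - -y) v := hcomm.units_inv_right
  set g : R := ∑ i ∈ Finset.range m, (-y) ^ i with hg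
  have h1 : (1 - -y) * g = 1 - (-y)^m := by
    have e1 : (1 - -y) * g = -((-y - 1) * g) := by noncomm_ring
    rw [e1, mul_geom_sum, neg_sub]
  have h2 : g * (1 - -y) = 1 - (-y)^m := by
    have e1 : g * (1 - -y) = -(g * (-y - 1)) := by noncomm_ring
    rw [e1, geom_sum_mul, neg_sub]
  have hy : (1 : R) + y = 1 - -y := by rw [sub_neg_eq_add]
  refine isUnit_iff_exists.mpr ⟨g * v, ?_, ?_⟩
  · rw [hy, ← mul_assoc, h1, hv1]
  · rw [hy, mul_assoc, ← hcinv.eq, ← mul_assoc, h2, hv1]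

end Helpers

section RingLemmas

variable {R : Type*} [Ring R]

private theorem unit_comm {c u : R} (hu1 : (1 + c) * u = 1) (hu2 : u * (1 + c) = 1) :
    c * u = u * c := by
  calc c*u = (u*(1+c))*(c*u) := by rw [hu2, one_mul]
  _ = (u*((1+c)*c))*u := by noncomm_ring
  _ = (u*(c*(1+c)))*u := by rw [show (1+c)*c = c*(1+c) by noncomm_ring]
  _ = (u*c)*((1+c)*u) := by noncomm_ring
  _ = u*c := by rw [hu1, mul_one]

private theorem delta_lemma (p c : R) (hp : p*p = p) (hpc : p*c = c) (hcp : c*p = c)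
    (hu : IsUnit (1 + c)) :
    ∃ d : R, (p + c)*d = p ∧ d*(p + c) = p ∧ p*d = d ∧ d*p = d := by
  set u : R := ((hu.unit⁻¹ : Rˣ) : R) with hudef
  have hu1 : (1 + c)*u = 1 := hu.mul_val_inv
  have hu2 : u*(1 + c) = 1 := hu.val_inv_mul
  have huc : c*u = u*c := unit_comm hu1 hu2
  have h9 : c*(c*u) + c*u = c := by
    calc c*(c*u) + c*u = c*((1+c)*u) := by noncomm_ring
    _ = c := by rw [hu1, mul_one]
  have hcup : (c*u)*p = c*u := by
    calc (c*u)*p = u*(c*p) := by rw [huc, mul_assoc]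
    _ = u*c := by rw [hcp]
    _ = c*u := huc.symm
  refine ⟨p - c*u, ?_, ?_, ?_, ?_⟩
  · have e1 : (p + c)*(p - c*u) = p*p + c*p - (p*(c*u) + c*(c*u)) := by noncomm_ring
    rw [e1, hp, hcp, ← mul_assoc, hpc]
    have e2 : c*u + c*(c*u) = c := by rw [add_comm]; exact h9
    rw [e2, add_sub_cancel_right]
  · have e1 : (p - c*u)*(p + c) = p*p + p*c - ((c*u)*p + (c*u)*c) := by noncomm_ring
    have e3 : (c*u)*c = c*(c*u) := by rw [mul_assoc, ← huc]
    rw [e1, hp, hpc, hcup, e3]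
    have e2 : c*u + c*(c*u) = c := by rw [add_comm]; exact h9
    rw [e2, add_sub_cancel_right]
  · rw [mul_sub, hp, ← mul_assoc, hpc]
  · rw [sub_mul, hp, hcup]

private theorem tri_unit (e α α' β δ δ' : R) (he : e*e = e)
    (hαα' : α*α' = e) (hα'α : α'*α = e)
    (heα : e*α = α) (hαe : α*e = α) (heα' : e*α' = α') (hα'e : α'*e = α')
    (heβ : e*β = β) (hβe : β*e = 0)
    (heδ : e*δ = 0) (hδe : δ*e = 0) (heδ' : e*δ' = 0) (hδ'e : δ'*e = 0)
    (hδδ' : δ*δ' = 1 - e) (hδ'δ : δ'*δ = 1 - e) : IsUnit (α + β + δ) := by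
  have hαδ' : α*δ' = 0 := by rw [← hαe, mul_assoc, heδ', mul_zero]
  have hβα' : β*α' = 0 := by rw [← heα', ← mul_assoc, hβe, zero_mul]
  have hδα' : δ*α' = 0 := by rw [← heα', ← mul_assoc, hδe, zero_mul]
  have hα'δ : α'*δ = 0 := by rw [← hα'e, mul_assoc, heδ, mul_zero]
  have hδ'α : δ'*α = 0 := by rw [← heα, ← mul_assoc, hδ'e, zero_mul]
  have hδ'β : δ'*β = 0 := by rw [← heβ, ← mul_assoc, hδ'e, zero_mul]
  refine isUnit_iff_exists.mpr ⟨α' + δ' - α'*β*δ', ?_, ?_⟩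
  · have e1 : (α+β+δ)*(α'+δ'-α'*β*δ') =
        α*α' + α*δ' - ((α*α')*β)*δ' + (β*α' + β*δ' - ((β*α')*β)*δ')
          + (δ*α' + δ*δ' - ((δ*α')*β)*δ') := by noncomm_ring
    rw [e1, hαα', hαδ', hβα', hδα', heβ, hδδ']
    simp only [zero_mul, zero_add, add_zero, sub_zero]
    abel
  · have e1 : (α'+δ'-α'*β*δ')*(α+β+δ) =
        α'*α + α'*β + α'*δ + (δ'*α + δ'*β + δ'*δ)
          - ((α'*β)*(δ'*α) + (α'*β)*(δ'*β) + (α'*β)*(δ'*δ)) := by noncomm_ring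
    rw [e1, hα'α, hα'δ, hδ'α, hδ'β, hδ'δ]
    have h3 : (α'*β)*(1-e) = α'*β := by
      rw [mul_sub, mul_one, mul_assoc, hβe, mul_zero, sub_zero]
    rw [h3]
    simp only [mul_zero, add_zero, zero_add]
    abel

private theorem corner_inv (e M α β δ δ' : R) (he : e*e = e)
    (hM : M = α + β + δ) (hMu : IsUnit M)
    (heα : e*α = α) (hαe : α*e = α)
    (heβ : e*β = β) (hβe : β*e = 0)
    (heδ : e*δ = 0) (hδe : δ*e = 0)
    (heδ' : e*δ' = 0) (hδ'e : δ'*e = 0)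
    (hδδ' : δ*δ' = 1 - e) (hδ'δ : δ'*δ = 1 - e) :
    ∃ α', (e*α' = α' ∧ α'*e = α') ∧ (α*α' = e ∧ α'*α = e) := by
  have hδ'α : δ'*α = 0 := by rw [← heα, ← mul_assoc, hδ'e, zero_mul]
  have hδ'β : δ'*β = 0 := by rw [← heβ, ← mul_assoc, hδ'e, zero_mul]
  have hnil : (β*δ')*(β*δ') = 0 := by
    rw [mul_assoc β δ' (β*δ'), ← mul_assoc δ' β δ', hδ'β, zero_mul, mul_zero]
  have hU1 : (1 - β*δ')*(1 + β*δ') = 1 := by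
    have e1 : (1 - β*δ')*(1 + β*δ') = 1 - (β*δ')*(β*δ') := by noncomm_ring
    rw [e1, hnil, sub_zero]
  have hU2 : (1 + β*δ')*(1 - β*δ') = 1 := by
    have e1 : (1 + β*δ')*(1 - β*δ') = 1 - (β*δ')*(β*δ') := by noncomm_ring
    rw [e1, hnil, sub_zero]
  have hUu : IsUnit (1 - β*δ') := isUnit_iff_exists.mpr ⟨1 + β*δ', hU1, hU2⟩
  have hTu : IsUnit ((1 - β*δ')*M) := hUu.mul hMu
  have hT : (1 - β*δ')*M = α + δ := by
    rw [hM]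
    have e1 : (1 - β*δ')*(α+β+δ) = α + β + δ - (β*(δ'*α) + β*(δ'*β) + β*(δ'*δ)) := by
      noncomm_ring
    rw [e1, hδ'α, hδ'β, hδ'δ, mul_zero]
    have e2 : β*(1-e) = β := by rw [mul_sub, mul_one, hβe, sub_zero]
    rw [e2]
    abel
  rw [hT] at hTu
  set S : R := ((hTu.unit⁻¹ : Rˣ) : R) with hS
  have hTS : (α + δ) * S = 1 := hTu.mul_val_inv
  have hST : S * (α + δ) = 1 := hTu.val_inv_mul
  have heT : e*(α+δ) = α := by rw [mul_add, heα, heδ, add_zero]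
  have hTe : (α+δ)*e = α := by rw [add_mul, hαe, hδe, add_zero]
  refine ⟨e*S*e, ⟨?_, ?_⟩, ?_, ?_⟩
  · calc e*(e*S*e) = (e*(e*S))*e := (mul_assoc _ _ _).symm
    _ = ((e*e)*S)*e := by rw [← mul_assoc e e S]
    _ = e*S*e := by rw [he]
  · calc (e*S*e)*e = (e*S)*(e*e) := mul_assoc _ _ _
    _ = e*S*e := by rw [he]
  · calc α*(e*S*e) = ((α*e)*S)*e := by rw [← mul_assoc, ← mul_assoc]
    _ = (α*S)*e := by rw [hαe]
    _ = ((e*(α+δ))*S)*e := by rw [heT]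
    _ = (e*((α+δ)*S))*e := by rw [mul_assoc e (α+δ) S]
    _ = e := by rw [hTS, mul_one, he]
  · calc (e*S*e)*α = (e*S)*(e*α) := mul_assoc _ _ _
    _ = (e*S)*α := by rw [heα]
    _ = (e*S)*((α+δ)*e) := by rw [hTe]
    _ = (e*(S*((α+δ)*e))) := by rw [mul_assoc]
    _ = (e*((S*(α+δ))*e)) := by rw [← mul_assoc S (α+δ) e]
    _ = e*(1*e) := by rw [hST]
    _ = e := by rw [one_mul, he]

end RingLemmas

set_option maxHeartbeats 3200000 in
/-- Corollary 3.7. -/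
theorem isCoreEPInv_exists_iff_polar (a : A) (n : ℕ) (hn : 0 < n) :
    (∃ x, IsCoreEPInv a x) ↔
      (∃ x, IsGDrazinInv a x) ∧
      ∃ p : A, p ^ 2 = p ∧ star p = p ∧ p * a = p * a * p ∧
        IsQuasinilpotent (p * a) ∧ IsUnit (a ^ n + p) := by
  constructor
  · rintro ⟨x, h1, h2, h3⟩
    obtain ⟨m, rfl⟩ : ∃ m, n = m + 1 := ⟨n - 1, by omega⟩
    have hq : SD (fun k => a^k - x*a^(k+1)) := (sd_iff (fun k => a^k - x*a^(k+1))).1 h3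
    have hax : a*(x*x) = x := by rw [← pow_two]; exact h1
    have haxpow : ∀ k, a*x^(k+2) = x^(k+1) := by
      intro k
      have e1 : x^(k+2) = (x*x)*x^k := by
        rw [Nat.add_comm k 2, pow_add, pow_two]
      rw [e1, ← mul_assoc, hax, ← pow_succ']
    have hpowe : ∀ k, a^(k+1)*x^(k+1) = a*x := by
      intro k; induction k with
      | zero => simp
      | succ k ih =>
        calc a^(k+1+1)*x^(k+1+1) = (a^(k+1)*a)*x^(k+1+1) := by rw [pow_succ]
        _ = a^(k+1)*(a*x^(k+1+1)) := by rw [mul_assoc]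
        _ = a^(k+1)*x^(k+1) := by rw [show k+1+1 = k+2 from rfl, haxpow k]
        _ = a*x := ih
    have key : (1 - x*a)*(a*x) = 0 := by
      apply eq_zero_of_bound _ ‖x‖ (norm_nonneg x)
      intro ε hε
      filter_upwards [hq ε hε, eventually_ge_atTop 1] with k hk hk1
      obtain ⟨j, rfl⟩ : ∃ j, k = j + 1 := ⟨k-1, by omega⟩
      have hqf : (1-x*a)*a^(j+1) = a^(j+1) - x*a^(j+1+1) := by
        rw [sub_mul, one_mul, mul_assoc, ← pow_succ']
      have e2 : (1-x*a)*(a*x) = ((1-x*a)*a^(j+1))*x^(j+1) := by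
        rw [mul_assoc, hpowe j]
      rw [e2]
      calc ‖((1-x*a)*a^(j+1))*x^(j+1)‖
          ≤ ‖(1-x*a)*a^(j+1)‖*‖x^(j+1)‖ := norm_mul_le _ _
      _ ≤ ε^(j+1)*‖x‖^(j+1) := by
          refine mul_le_mul ?_ (norm_pow_le' x (by omega)) (norm_nonneg _) (by positivity)
          rw [hqf]; exact hk
    have hxax : x*a*x = x := by
      have h4 : (1-x*a)*x = 0 := by
        calc (1-x*a)*x = (1-x*a)*(a*(x*x)) := by rw [hax]
        _ = ((1-x*a)*(a*x))*x := by noncomm_ring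
        _ = 0 := by rw [key, zero_mul]
      rw [sub_mul, one_mul, sub_eq_zero] at h4
      exact h4.symm
    have hax2 : x*(a*(a*x)) = a*x := by
      have h5 := key
      rw [sub_mul, one_mul, sub_eq_zero] at h5
      calc x*(a*(a*x)) = x*a*(a*x) := by rw [← mul_assoc]
      _ = a*x := h5.symm
    have hee : (a*x)*(a*x) = a*x := by
      calc (a*x)*(a*x) = a*(x*a*x) := by noncomm_ring
      _ = a*x := by rw [hxax]
    have hex : (a*x)*x = x := by rw [mul_assoc]; exact hax
    have hxe : x*(a*x) = x := by rw [← mul_assoc]; exact hxax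
    have hpe : (1-a*x)*(a*x) = 0 := by rw [sub_mul, one_mul, hee, sub_self]
    have hep : (a*x)*(1-a*x) = 0 := by rw [mul_sub, mul_one, hee, sub_self]
    have hpx : (1-a*x)*x = 0 := by rw [sub_mul, one_mul, hex, sub_self]
    have hxp : x*(1-a*x) = 0 := by rw [mul_sub, mul_one, hxe, sub_self]
    have hp2' : (1-a*x)*(1-a*x) = 1-a*x := by
      have e1 : (1-a*x)*(1-a*x) = 1 - a*x - ((a*x) - (a*x)*(a*x)) := by noncomm_ring
      rw [e1, hee, sub_self, sub_zero]
    have hpae : (1-a*x)*a*(a*x) = 0 := by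
      have e1 : (1-a*x)*a*(a*x) = a*(a*x) - a*(x*(a*(a*x))) := by noncomm_ring
      rw [e1, hax2, sub_self]
    have hA1rel : a*(a*x) = a*x*a*(a*x) := by
      have h5 : (1-a*x)*a*(a*x) = 0 := hpae
      have e1 : (1-a*x)*a*(a*x) = a*(a*x) - a*x*a*(a*x) := by noncomm_ring
      rw [e1, sub_eq_zero] at h5
      exact h5
    have hpap : (1-a*x)*a*(1-a*x) = (1-a*x)*a := by
      have e1 : (1-a*x)*a*(1-a*x) = (1-a*x)*a - (1-a*x)*a*(a*x) := by noncomm_ring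
      rw [e1, hpae, sub_zero]
    set Q : A := (1-a*x)*a with hQdef
    have hQpow : ∀ k, Q^(k+1) = (1-a*x)*a^(k+1) := by
      intro k; induction k with
      | zero => simpa using hQdef
      | succ k ih =>
        calc Q^(k+1+1) = Q*Q^(k+1) := pow_succ' _ _
        _ = Q*((1-a*x)*a^(k+1)) := by rw [ih]
        _ = (Q*(1-a*x))*a^(k+1) := by rw [← mul_assoc]
        _ = Q*a^(k+1) := by rw [hpap]
        _ = (1-a*x)*(a*a^(k+1)) := by rw [hQdef, mul_assoc]
        _ = (1-a*x)*a^(k+1+1) := by rw [← pow_succ']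
    have hQSD : SD (fun k => Q^k) := by
      apply sd_shift (fun k => a^k - x*a^(k+1)) _ ‖a‖ (norm_nonneg a) hq
      intro k
      show ‖Q^(k+1)‖ ≤ ‖a‖ * ‖a^k - x*a^(k+1)‖
      have e1 : Q^(k+1) = a*(a^k - x*a^(k+1)) := by
        rw [hQpow k, pow_succ' a k]
        generalize a^k = w
        noncomm_ring
      rw [e1]
      exact norm_mul_le a _
    have hQquasi : IsQuasinilpotent Q := (sd_iff (fun k => Q^k)).2 hQSD
    have heA1 : (a*x)*(a*x*a*(a*x)) = a*x*a*(a*x) := by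
      calc (a*x)*(a*x*a*(a*x)) = ((a*x)*(a*x))*(a*(a*x)) := by noncomm_ring
      _ = (a*x)*(a*(a*x)) := by rw [hee]
      _ = a*x*a*(a*x) := by noncomm_ring
    have heA1k : ∀ k, (a*x)*(a*x*a*(a*x))^(k+1) = (a*x*a*(a*x))^(k+1) := by
      intro k
      rw [pow_succ', ← mul_assoc, heA1]
    have hpA1 : (1-a*x)*(a*x*a*(a*x)) = 0 := by
      calc (1-a*x)*(a*x*a*(a*x)) = ((1-a*x)*(a*x))*(a*(a*x)) := by noncomm_ring
      _ = 0 := by rw [hpe, zero_mul]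
    have hpA1k : ∀ k, (1-a*x)*(a*x*a*(a*x))^(k+1) = 0 := by
      intro k
      rw [pow_succ', ← mul_assoc, hpA1, zero_mul]
    have hapowe : ∀ k, a^(k+1)*(a*x) = (a*x*a*(a*x))^(k+1) := by
      intro k; induction k with
      | zero => simpa using hA1rel
      | succ k ih =>
        calc a^(k+1+1)*(a*x) = (a*a^(k+1))*(a*x) := by rw [pow_succ']
        _ = a*(a^(k+1)*(a*x)) := by rw [mul_assoc]
        _ = a*(a*x*a*(a*x))^(k+1) := by rw [ih]
        _ = a*((a*x)*(a*x*a*(a*x))^(k+1)) := by rw [heA1k]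
        _ = (a*(a*x))*(a*x*a*(a*x))^(k+1) := by rw [← mul_assoc]
        _ = (a*x*a*(a*x))*(a*x*a*(a*x))^(k+1) := by rw [hA1rel]
        _ = (a*x*a*(a*x))^(k+1+1) := by rw [← pow_succ']
    have hxA1 : x*(a*x*a*(a*x)) = a*x := by
      calc x*(a*x*a*(a*x)) = (x*(a*x))*(a*(a*x)) := by noncomm_ring
      _ = x*(a*(a*x)) := by rw [hxe]
      _ = a*x := hax2
    have hxpowA1 : ∀ k, x^(k+1)*(a*x*a*(a*x))^(k+1) = a*x := by
      intro k; induction k with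
      | zero => simpa using hxA1
      | succ k ih =>
        calc x^(k+1+1)*(a*x*a*(a*x))^(k+1+1)
            = (x^(k+1)*x)*((a*x*a*(a*x))*(a*x*a*(a*x))^(k+1)) := by
              rw [pow_succ x (k+1), pow_succ' (a*x*a*(a*x)) (k+1)]
        _ = x^(k+1)*((x*(a*x*a*(a*x)))*(a*x*a*(a*x))^(k+1)) := by noncomm_ring
        _ = x^(k+1)*((a*x)*(a*x*a*(a*x))^(k+1)) := by rw [hxA1]
        _ = x^(k+1)*(a*x*a*(a*x))^(k+1) := by rw [heA1k]
        _ = a*x := ih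
    have heα : (a*x)*(a^(m+1)*(a*x)) = a^(m+1)*(a*x) := by rw [hapowe m]; exact heA1k m
    have hpα : (1-a*x)*(a^(m+1)*(a*x)) = 0 := by rw [hapowe m]; exact hpA1k m
    have hαe : (a^(m+1)*(a*x))*(a*x) = a^(m+1)*(a*x) := by rw [mul_assoc, hee]
    have heα' : (a*x)*x^(m+1) = x^(m+1) := by
      rw [mul_assoc, ← pow_succ', show m+1+1 = m+2 from rfl]
      exact haxpow m
    have hα'e : x^(m+1)*(a*x) = x^(m+1) := by
      rw [pow_succ x m, mul_assoc, hxe]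
    have hαα' : (a^(m+1)*(a*x))*x^(m+1) = a*x := by
      rw [mul_assoc, heα']
      exact hpowe m
    have hα'α : x^(m+1)*(a^(m+1)*(a*x)) = a*x := by rw [hapowe m]; exact hxpowA1 m
    have hce : ((1-a*x)*a^(m+1))*(a*x) = 0 := by rw [mul_assoc]; exact hpα
    have hec : (a*x)*((1-a*x)*a^(m+1)) = 0 := by rw [← mul_assoc, hep, zero_mul]
    have hcp : ((1-a*x)*a^(m+1))*(1-a*x) = (1-a*x)*a^(m+1) := by
      rw [mul_sub, mul_one, hce, sub_zero]
    have hpc : (1-a*x)*((1-a*x)*a^(m+1)) = (1-a*x)*a^(m+1) := by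
      rw [← mul_assoc, hp2']
    have hcQ : (1-a*x)*a^(m+1) = Q^(m+1) := (hQpow m).symm
    have hcunit : IsUnit (1 + (1-a*x)*a^(m+1)) := by
      obtain ⟨N, hN⟩ := eventually_atTop.1 (hQSD (1/2) (by norm_num))
      have hexp : N ≤ (m+1)*(N+1) := by nlinarith
      have hlt : ‖((1-a*x)*a^(m+1))^(N+1)‖ < 1 := by
        have e1 : ((1-a*x)*a^(m+1))^(N+1) = Q^((m+1)*(N+1)) := by
          rw [hcQ, ← pow_mul]
        rw [e1]
        calc ‖Q^((m+1)*(N+1))‖ ≤ (1/2:ℝ)^((m+1)*(N+1)) := hN _ hexp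
        _ < 1 := pow_lt_one₀ (by norm_num) (by norm_num) (by positivity)
      exact isUnit_one_add_of_pow _ (N+1) (by omega) hlt
    obtain ⟨δ', hδδ', hδ'δ, hpδ', hδ'p⟩ :=
      delta_lemma (1-a*x) ((1-a*x)*a^(m+1)) hp2' hpc hcp hcunit
    have heδ : (a*x)*((1-a*x) + (1-a*x)*a^(m+1)) = 0 := by
      rw [mul_add, hep, hec, add_zero]
    have hδe : ((1-a*x) + (1-a*x)*a^(m+1))*(a*x) = 0 := by
      rw [add_mul, hpe, hce, add_zero]
    have heδ' : (a*x)*δ' = 0 := by rw [← hpδ', ← mul_assoc, hep, zero_mul]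
    have hδ'e : δ'*(a*x) = 0 := by rw [← hδ'p, mul_assoc, hpe, mul_zero]
    have heβ : (a*x)*((a*x)*(a^(m+1)*(1-a*x))) = (a*x)*(a^(m+1)*(1-a*x)) := by
      rw [← mul_assoc, hee]
    have hβe : ((a*x)*(a^(m+1)*(1-a*x)))*(a*x) = 0 := by
      calc ((a*x)*(a^(m+1)*(1-a*x)))*(a*x)
          = ((a*x)*a^(m+1))*((1-a*x)*(a*x)) := by noncomm_ring
      _ = 0 := by rw [hpe, mul_zero]
    have hM : a^(m+1) + (1-a*x) =
        a^(m+1)*(a*x) + (a*x)*(a^(m+1)*(1-a*x)) + ((1-a*x) + (1-a*x)*a^(m+1)) := by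
      have e1 : a^(m+1) + (1-a*x) =
          a^(m+1)*(a*x) + (a*x)*(a^(m+1)*(1-a*x)) + ((1-a*x) + (1-a*x)*a^(m+1))
            - (1-a*x)*(a^(m+1)*(a*x)) := by
        generalize a^(m+1) = w
        noncomm_ring
      rw [e1, hpα, sub_zero]
    have hMu : IsUnit (a^(m+1) + (1-a*x)) := by
      rw [hM]
      exact tri_unit (a*x) (a^(m+1)*(a*x)) (x^(m+1)) ((a*x)*(a^(m+1)*(1-a*x)))
        ((1-a*x) + (1-a*x)*a^(m+1)) δ' hee hαα' hα'α heα hαe heα' hα'e heβ hβe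
        heδ hδe heδ' hδ'e hδδ' hδ'δ
    -- the g-Drazin inverse via a series
    have hBe : (a*x*a*(1-a*x))*(a*x) = 0 := by
      calc (a*x*a*(1-a*x))*(a*x) = (a*x*a)*((1-a*x)*(a*x)) := by noncomm_ring
      _ = 0 := by rw [hpe, mul_zero]
    have hBx : (a*x*a*(1-a*x))*x = 0 := by
      calc (a*x*a*(1-a*x))*x = (a*x*a)*((1-a*x)*x) := by noncomm_ring
      _ = 0 := by rw [hpx, mul_zero]
    set B : A := a*x*a*(1-a*x) with hBdef
    have hfsnorm : ∀ k, ‖x^(k+2)*B*Q^k‖ ≤ (‖x‖^2*‖B‖) * (‖x‖^k * ‖Q^k‖) := by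
      intro k
      calc ‖x^(k+2)*B*Q^k‖ ≤ ‖x^(k+2)*B‖*‖Q^k‖ := norm_mul_le _ _
      _ ≤ (‖x^(k+2)‖*‖B‖)*‖Q^k‖ :=
          mul_le_mul_of_nonneg_right (norm_mul_le _ _) (norm_nonneg _)
      _ ≤ ((‖x‖^(k+2))*‖B‖)*‖Q^k‖ :=
          mul_le_mul_of_nonneg_right
            (mul_le_mul_of_nonneg_right (norm_pow_le' x (by omega)) (norm_nonneg _))
            (norm_nonneg _)
      _ = (‖x‖^2*‖B‖) * (‖x‖^k * ‖Q^k‖) := by ring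
    have hsum : Summable (fun k => x^(k+2)*B*Q^k) :=
      summable_of_sd _ (fun k => Q^k) (‖x‖^2*‖B‖) ‖x‖ (by positivity)
        (norm_nonneg x) hQSD hfsnorm
    have hfsnorm2 : ∀ k, ‖x^(k+1)*B*Q^k‖ ≤ (‖x‖*‖B‖) * (‖x‖^k * ‖Q^k‖) := by
      intro k
      calc ‖x^(k+1)*B*Q^k‖ ≤ ‖x^(k+1)*B‖*‖Q^k‖ := norm_mul_le _ _
      _ ≤ (‖x^(k+1)‖*‖B‖)*‖Q^k‖ :=
          mul_le_mul_of_nonneg_right (norm_mul_le _ _) (norm_nonneg _)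
      _ ≤ ((‖x‖^(k+1))*‖B‖)*‖Q^k‖ :=
          mul_le_mul_of_nonneg_right
            (mul_le_mul_of_nonneg_right (norm_pow_le' x (by omega)) (norm_nonneg _))
            (norm_nonneg _)
      _ = (‖x‖*‖B‖) * (‖x‖^k * ‖Q^k‖) := by ring
    have hsum2 : Summable (fun k => x^(k+1)*B*Q^k) :=
      summable_of_sd _ (fun k => Q^k) (‖x‖*‖B‖) ‖x‖ (by positivity)
        (norm_nonneg x) hQSD hfsnorm2
    set s : A := ∑' k, x^(k+2)*B*Q^k with hsdef
    clear_value s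
    have hstep1 : a*(∑' k, x^(k+2)*B*Q^k) = ∑' k, x^(k+1)*B*Q^k := by
      rw [← hsum.tsum_mul_left a]
      exact tsum_congr fun k => by
        show a*(x^(k+2)*B*Q^k) = x^(k+1)*B*Q^k
        rw [← mul_assoc, ← mul_assoc a (x^(k+2)) B, haxpow k]
    have hstep2 : (∑' k, x^(k+1)*B*Q^k) = x*B + (∑' k, x^(k+2)*B*Q^k)*Q := by
      rw [Summable.tsum_eq_zero_add hsum2]
      congr 1
      · simp
      · rw [← hsum.tsum_mul_right Q]
        exact tsum_congr fun k => by
          show x^(k+1+1)*B*Q^(k+1) = (x^(k+2)*B*Q^k)*Q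
          rw [show k+1+1 = k+2 from rfl, mul_assoc (x^(k+2)*B) (Q^k) Q, ← pow_succ]
    have ha_s : a*s = x*B + s*Q := by rw [hsdef, hstep1, hstep2]
    have haxxk : ∀ k, (a*x)*x^(k+2) = x^(k+2) := by
      intro k
      rw [mul_assoc, ← pow_succ', show k+2+1 = k+1+2 from rfl, haxpow (k+1),
        show k+1+1 = k+2 from rfl]
    have hes : (a*x)*s = s := by
      rw [hsdef, ← hsum.tsum_mul_left (a*x)]
      exact tsum_congr fun k => by
        show (a*x)*(x^(k+2)*B*Q^k) = x^(k+2)*B*Q^k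
        rw [← mul_assoc, ← mul_assoc (a*x) (x^(k+2)) B, haxxk k]
    have hpxk : ∀ k, (1-a*x)*x^(k+2) = 0 := by
      intro k
      rw [show k+2 = (k+1)+1 from rfl, pow_succ', ← mul_assoc, hpx, zero_mul]
    have hps : (1-a*x)*s = 0 := by
      have hterm : ∀ k:ℕ, (1-a*x)*(x^(k+2)*B*Q^k) = 0 := fun k => by
        rw [← mul_assoc, ← mul_assoc (1-a*x) (x^(k+2)) B, hpxk k, zero_mul, zero_mul]
      rw [hsdef, ← hsum.tsum_mul_left (1-a*x)]
      simp [hterm]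
    have hQx : Q*x = 0 := by rw [hQdef, mul_assoc]; exact hpe
    have hfse : ∀ k, (x^(k+2)*B*Q^k)*(a*x) = 0 := by
      intro k; cases k with
      | zero =>
        calc (x^(0+2)*B*Q^0)*(a*x) = x^(0+2)*(B*(a*x)) := by
              rw [pow_zero, mul_one, mul_assoc]
        _ = 0 := by rw [hBe, mul_zero]
      | succ k =>
        calc (x^(k+1+2)*B*Q^(k+1))*(a*x) = (x^(k+1+2)*B*Q^k)*(Q*(a*x)) := by
              rw [pow_succ (Q) k]
              noncomm_ring
        _ = 0 := by rw [hpae, mul_zero]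
    have hse : s*(a*x) = 0 := by
      rw [hsdef, ← hsum.tsum_mul_right (a*x)]
      simp [hfse]
    have hBs : B*s = 0 := by
      rw [hBdef]
      calc (a*x*a*(1-a*x))*s = (a*x*a)*((1-a*x)*s) := by noncomm_ring
      _ = 0 := by rw [hps, mul_zero]
    have hQs : Q*s = 0 := by
      rw [hQdef, mul_assoc]
      rw [show (1-a*x)*(a*s) = (1-a*x)*(x*B + s*Q) from by rw [ha_s]]
      rw [mul_add, ← mul_assoc, ← mul_assoc (1-a*x) s Q, hpx, hps, zero_mul, zero_mul,
        add_zero]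
    have hxa : x*a = a*x + x*B := by
      have hdec : a = a*x*a*(a*x) + (a*x*a*(1-a*x) + (1-a*x)*a) := by noncomm_ring
      calc x*a = x*(a*x*a*(a*x) + (a*x*a*(1-a*x) + (1-a*x)*a)) := by
            conv_lhs => rw [hdec]
      _ = x*(a*x*a*(a*x)) + (x*(a*x*a*(1-a*x)) + x*((1-a*x)*a)) := by rw [mul_add, mul_add]
      _ = a*x + (x*B + (x*(1-a*x))*a) := by
            rw [hxA1, ← hBdef, ← mul_assoc x (1-a*x) a]
      _ = a*x + x*B := by rw [hxp, zero_mul, add_zero]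
    have hsa : s*a = s*Q := by
      have hdec : a = a*x*a*(a*x) + (a*x*a*(1-a*x) + (1-a*x)*a) := by noncomm_ring
      calc s*a = s*(a*x*a*(a*x) + (a*x*a*(1-a*x) + (1-a*x)*a)) := by
            conv_lhs => rw [hdec]
      _ = s*(a*x*a*(a*x)) + (s*(a*x*a*(1-a*x)) + s*((1-a*x)*a)) := by
            rw [mul_add, mul_add]
      _ = (s*(a*x))*(a*(a*x)) + ((s*(a*x))*(a*(1-a*x)) + s*Q) := by
            rw [← hQdef,
              show s*(a*x*a*(a*x)) = (s*(a*x))*(a*(a*x)) from by noncomm_ring,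
              show s*(a*x*a*(1-a*x)) = (s*(a*x))*(a*(1-a*x)) from by noncomm_ring]
      _ = s*Q := by rw [hse, zero_mul, zero_mul, zero_add, zero_add]
    have hda : (x+s)*a = a*x + x*B + s*Q := by
      rw [add_mul, hxa, hsa]
    have had : a*(x+s) = a*x + x*B + s*Q := by
      rw [mul_add, ha_s]
      abel
    have hcommd : a*(x+s) = (x+s)*a := by rw [had, hda]
    have hdad : (x+s)*a*(x+s) = x+s := by
      rw [hda]
      calc (a*x + x*B + s*Q)*(x+s)
          = (a*x)*x + (a*x)*s + (x*(B*x) + x*(B*s)) + (s*(Q*x) + s*(Q*s)) := by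
            noncomm_ring
      _ = x + s + (x*0 + x*0) + (s*0 + s*0) := by rw [hex, hes, hBx, hBs, hQx, hQs]
      _ = x + s := by simp
    have ha2d : a^2*(x+s) = a*(a*x) + (a*x)*B + ((x*B)*Q + (s*Q)*Q) := by
      calc a^2*(x+s) = a*(a*(x+s)) := by rw [pow_two, mul_assoc]
      _ = a*(a*x + x*B + s*Q) := by rw [had]
      _ = a*(a*x) + a*(x*B) + a*(s*Q) := by rw [mul_add, mul_add]
      _ = a*(a*x) + (a*x)*B + (a*s)*Q := by rw [← mul_assoc a x B, ← mul_assoc a s Q]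
      _ = a*(a*x) + (a*x)*B + (x*B + s*Q)*Q := by rw [ha_s]
      _ = a*(a*x) + (a*x)*B + ((x*B)*Q + (s*Q)*Q) := by rw [add_mul]
    have heB : (a*x)*B = B := by
      rw [hBdef]
      calc (a*x)*(a*x*a*(1-a*x)) = ((a*x)*(a*x))*(a*(1-a*x)) := by noncomm_ring
      _ = (a*x)*(a*(1-a*x)) := by rw [hee]
      _ = a*x*a*(1-a*x) := by noncomm_ring
    have haap : a - a*(a*x) = B + Q := by
      have e1 : a - a*(a*x) = a*x*a*(1-a*x) + (1-a*x)*a*(1-a*x) := by noncomm_ring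
      rw [e1, ← hQdef, hpap, ← hBdef]
    have hz : a - a^2*(x+s) = Q - (x*B)*Q - (s*Q)*Q := by
      rw [ha2d]
      have e2 : a - (a*(a*x) + (a*x)*B + ((x*B)*Q + (s*Q)*Q))
          = (a - a*(a*x)) - (a*x)*B - (x*B)*Q - (s*Q)*Q := by abel
      rw [e2, haap, heB]
      abel
    have hWe : (Q - (x*B)*Q - (s*Q)*Q)*(a*x) = 0 := by
      have e1 : (Q - (x*B)*Q - (s*Q)*Q)*(a*x)
          = Q*(a*x) - (x*B)*(Q*(a*x)) - (s*Q)*(Q*(a*x)) := by noncomm_ring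
      rw [e1, hpae]
      simp
    set W : A := Q - (x*B)*Q - (s*Q)*Q with hWdef
    clear_value W
    set u : A := (a*x)*W with hu
    set v : A := (1-a*x)*W with hv
    clear_value u v
    have hWuv : W = u + v := by rw [hu, hv]; noncomm_ring
    have hvQ : v = Q := by
      rw [hv, hWdef]
      have e1 : (1-a*x)*(Q - (x*B)*Q - (s*Q)*Q)
          = (1-a*x)*Q - ((1-a*x)*x)*(B*Q) - ((1-a*x)*s)*(Q*Q) := by noncomm_ring
      rw [e1, hpx, hps, zero_mul, zero_mul, sub_zero, sub_zero]
      rw [hQdef, ← mul_assoc, hp2']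
    have huu : u*u = 0 := by
      rw [hu]
      calc ((a*x)*W)*((a*x)*W) = (a*x)*((W*(a*x))*W) := by noncomm_ring
      _ = 0 := by rw [hWe, zero_mul, mul_zero]
    have hvu : v*u = 0 := by
      rw [hu, hv]
      calc ((1-a*x)*W)*((a*x)*W) = (1-a*x)*((W*(a*x))*W) := by noncomm_ring
      _ = 0 := by rw [hWe, zero_mul, mul_zero]
    have huvu : ∀ k, (u*v^k)*u = 0 := by
      intro k; cases k with
      | zero => rw [pow_zero, mul_one]; exact huu
      | succ k =>
        calc (u*v^(k+1))*u = (u*v^k)*(v*u) := by rw [pow_succ]; noncomm_ring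
        _ = 0 := by rw [hvu, mul_zero]
    have hvz : ∀ k, v^(k+1)*W = v^(k+1)*v := by
      intro k
      have hvW : v*W = v*v := by
        calc v*W = v*(u+v) := by rw [← hWuv]
        _ = v*u + v*v := by rw [mul_add]
        _ = v*v := by rw [hvu, zero_add]
      calc v^(k+1)*W = v^k*(v*W) := by rw [pow_succ, mul_assoc]
      _ = v^k*(v*v) := by rw [hvW]
      _ = v^(k+1)*v := by rw [← mul_assoc, ← pow_succ]
    have huvz : ∀ k, (u*v^k)*W = u*v^(k+1) := by
      intro k
      calc (u*v^k)*W = (u*v^k)*(u+v) := by rw [← hWuv]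
      _ = (u*v^k)*u + (u*v^k)*v := by rw [mul_add]
      _ = u*(v^k*v) := by rw [huvu k, zero_add, mul_assoc]
      _ = u*v^(k+1) := by rw [← pow_succ]
    have hWpow : ∀ k, W^(k+1) = v^(k+1) + u*v^k := by
      intro k; induction k with
      | zero =>
        rw [pow_one, pow_one, pow_zero, mul_one, hWuv]
        exact add_comm u v
      | succ k ih =>
        calc W^(k+1+1) = W^(k+1)*W := pow_succ _ _
        _ = (v^(k+1) + u*v^k)*W := by rw [ih]
        _ = v^(k+1)*W + (u*v^k)*W := by rw [add_mul]
        _ = v^(k+1)*v + u*v^(k+1) := by rw [hvz k, huvz k]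
        _ = v^(k+1+1) + u*v^(k+1) := by rw [← pow_succ]
    have hWSD : SD (fun k => W^k) := by
      apply sd_shift (fun k => Q^k) _ (‖Q‖ + ‖u‖) (by positivity) hQSD
      intro k
      show ‖W^(k+1)‖ ≤ (‖Q‖ + ‖u‖) * ‖Q^k‖
      rw [hWpow k, hvQ]
      calc ‖Q^(k+1) + u*Q^k‖ ≤ ‖Q^(k+1)‖ + ‖u*Q^k‖ := norm_add_le _ _
      _ ≤ ‖Q‖*‖Q^k‖ + ‖u‖*‖Q^k‖ := by
          refine add_le_add ?_ (norm_mul_le _ _)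
          rw [pow_succ']
          exact norm_mul_le _ _
      _ = (‖Q‖ + ‖u‖)*‖Q^k‖ := by ring
    have hWquasi : IsQuasinilpotent (a - a^2*(x+s)) := by
      rw [hz]
      exact (sd_iff (fun k => W^k)).2 hWSD
    refine ⟨⟨x+s, hcommd, hdad, hWquasi⟩, 1-a*x, ?_, ?_, ?_, ?_, hMu⟩
    · rw [pow_two]; exact hp2'
    · rw [star_sub, star_one, h2]
    · rw [← hQdef]; exact hpap.symm
    · rw [← hQdef]; exact hQquasi
  · rintro ⟨-, p, hp2, hps, hpap, hqn, hu⟩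
    obtain ⟨m, rfl⟩ : ∃ m, n = m + 1 := ⟨n - 1, by omega⟩
    have hp2' : p * p = p := by rw [← pow_two]; exact hp2
    have hqsd : SD (fun k => (p*a)^k) := (sd_iff (fun k => (p*a)^k)).1 hqn
    have hpaq : p*a*(1-p) = 0 := by rw [mul_sub, mul_one, ← hpap, sub_self]
    have hpak : ∀ k, (p*a)^(k+1) = p*a^(k+1) := by
      intro k; induction k with
      | zero => simp
      | succ k ih =>
        calc (p*a)^(k+1+1) = (p*a)*(p*a)^(k+1) := pow_succ' _ _
        _ = (p*a)*(p*a^(k+1)) := by rw [ih]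
        _ = ((p*a)*p)*a^(k+1) := by rw [← mul_assoc]
        _ = (p*a)*a^(k+1) := by rw [← hpap]
        _ = p*(a*a^(k+1)) := by rw [mul_assoc]
        _ = p*a^(k+1+1) := by rw [← pow_succ']
    have hpanq : ∀ k, p*a^(k+1)*(1-p) = 0 := by
      intro k; induction k with
      | zero => simpa using hpaq
      | succ k ih =>
        have h1 : p*a^(k+1+1) = (p*a)*(p*a^(k+1)) := by
          rw [← hpak, ← hpak, ← pow_succ']
        calc p*a^(k+1+1)*(1-p) = ((p*a)*(p*a^(k+1)))*(1-p) := by rw [h1]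
        _ = (p*a)*((p*a^(k+1))*(1-p)) := by rw [mul_assoc]
        _ = 0 := by rw [ih, mul_zero]
    have hcpc : p*a^(m+1)*p = p*a^(m+1) := by
      have h := hpanq m
      rw [mul_sub, mul_one, sub_eq_zero] at h
      exact h.symm
    have hcunit : IsUnit (1 + p*a^(m+1)) := by
      obtain ⟨N, hN⟩ := eventually_atTop.1 (hqsd (1/2) (by norm_num))
      have hexp : N ≤ (m+1)*(N+1) := by nlinarith
      have hlt : ‖(p*a^(m+1))^(N+1)‖ < 1 := by
        have h1 : (p*a^(m+1))^(N+1) = (p*a)^((m+1)*(N+1)) := by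
          rw [← hpak m, ← pow_mul]
        rw [h1]
        calc ‖(p*a)^((m+1)*(N+1))‖ ≤ (1/2:ℝ)^((m+1)*(N+1)) := hN _ hexp
        _ < 1 := pow_lt_one₀ (by norm_num) (by norm_num) (by positivity)
      exact isUnit_one_add_of_pow _ (N+1) (by omega) hlt
    have hqp : (1-p)*p = 0 := by rw [sub_mul, one_mul, hp2', sub_self]
    have hpq : p*(1-p) = 0 := by rw [mul_sub, mul_one, hp2', sub_self]
    have hqq : (1-p)*(1-p) = 1-p := by
      have e1 : (1-p)*(1-p) = 1 - p - (p - p*p) := by noncomm_ring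
      rw [e1, hp2', sub_self, sub_zero]
    have hpc : p*(p*a^(m+1)) = p*a^(m+1) := by rw [← mul_assoc, hp2']
    obtain ⟨δ', hδδ', hδ'δ, hpδ', hδ'p⟩ :=
      delta_lemma p (p*a^(m+1)) hp2' hpc hcpc hcunit
    have hqc : (1-p)*(p*a^(m+1)) = 0 := by rw [← mul_assoc, hqp, zero_mul]
    have hcq : p*a^(m+1)*(1-p) = 0 := hpanq m
    have heα : (1-p)*(a^(m+1)*(1-p)) = a^(m+1)*(1-p) := by
      have h0 : p*(a^(m+1)*(1-p)) = 0 := by rw [← mul_assoc]; exact hpanq m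
      calc (1-p)*(a^(m+1)*(1-p)) = a^(m+1)*(1-p) - p*(a^(m+1)*(1-p)) := by noncomm_ring
      _ = a^(m+1)*(1-p) := by rw [h0, sub_zero]
    have hαe : (a^(m+1)*(1-p))*(1-p) = a^(m+1)*(1-p) := by rw [mul_assoc, hqq]
    have heβ : (1-p)*((1-p)*a^(m+1)*p) = (1-p)*a^(m+1)*p := by
      calc (1-p)*((1-p)*a^(m+1)*p) = ((1-p)*(1-p))*(a^(m+1)*p) := by noncomm_ring
      _ = (1-p)*(a^(m+1)*p) := by rw [hqq]
      _ = (1-p)*a^(m+1)*p := by rw [← mul_assoc]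
    have hβe : ((1-p)*a^(m+1)*p)*(1-p) = 0 := by
      calc ((1-p)*a^(m+1)*p)*(1-p) = ((1-p)*a^(m+1))*(p*(1-p)) := by noncomm_ring
      _ = 0 := by rw [hpq, mul_zero]
    have heδ : (1-p)*(p + p*a^(m+1)) = 0 := by rw [mul_add, hqp, hqc, add_zero]
    have hδe : (p + p*a^(m+1))*(1-p) = 0 := by rw [add_mul, hpq, hcq, add_zero]
    have heδ' : (1-p)*δ' = 0 := by rw [← hpδ', ← mul_assoc, hqp, zero_mul]
    have hδ'e : δ'*(1-p) = 0 := by rw [← hδ'p, mul_assoc, hpq, mul_zero]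
    have hδδ'1 : (p + p*a^(m+1))*δ' = 1 - (1-p) := by rw [sub_sub_cancel]; exact hδδ'
    have hδ'δ1 : δ'*(p + p*a^(m+1)) = 1 - (1-p) := by rw [sub_sub_cancel]; exact hδ'δ
    have hM : a^(m+1) + p = a^(m+1)*(1-p) + (1-p)*a^(m+1)*p + (p + p*a^(m+1)) := by
      have e1 : a^(m+1) + p = a^(m+1)*(1-p) + (1-p)*a^(m+1)*p + (p + p*a^(m+1)*p) := by
        generalize a^(m+1) = w
        noncomm_ring
      rw [e1, hcpc]
    obtain ⟨α', ⟨hqα', hα'q⟩, hαα', hα'α⟩ :=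
      corner_inv (1-p) (a^(m+1)+p) (a^(m+1)*(1-p)) ((1-p)*a^(m+1)*p) (p + p*a^(m+1)) δ'
        hqq hM hu heα hαe heβ hβe heδ hδe heδ' hδ'e hδδ'1 hδ'δ1
    have haq : a*(1-p) = (1-p)*a*(1-p) := by
      have h0 : p*(a*(1-p)) = 0 := by rw [← mul_assoc]; exact hpaq
      calc a*(1-p) = (1-p)*a*(1-p) + p*(a*(1-p)) := by noncomm_ring
      _ = (1-p)*a*(1-p) := by rw [h0, add_zero]
    set R1 : A := (1-p)*a*(1-p) with hR1def
    have hqR1 : (1-p)*R1 = R1 := by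
      rw [hR1def]
      calc (1-p)*((1-p)*a*(1-p)) = ((1-p)*(1-p))*(a*(1-p)) := by noncomm_ring
      _ = (1-p)*(a*(1-p)) := by rw [hqq]
      _ = (1-p)*a*(1-p) := by rw [← mul_assoc]
    have hR1q : R1*(1-p) = R1 := by rw [hR1def, mul_assoc, hqq]
    have hqRk : ∀ k, (1-p)*R1^(k+1) = R1^(k+1) := by
      intro k
      rw [pow_succ', ← mul_assoc, hqR1]
    have hapow : ∀ k, a^(k+1)*(1-p) = R1^(k+1) := by
      intro k; induction k with
      | zero => simpa using haq
      | succ k ih =>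
        calc a^(k+1+1)*(1-p) = (a*a^(k+1))*(1-p) := by rw [pow_succ']
        _ = a*(a^(k+1)*(1-p)) := by rw [mul_assoc]
        _ = a*R1^(k+1) := by rw [ih]
        _ = a*((1-p)*R1^(k+1)) := by rw [hqRk]
        _ = (a*(1-p))*R1^(k+1) := by rw [← mul_assoc]
        _ = R1*R1^(k+1) := by rw [haq]
        _ = R1^(k+1+1) := by rw [← pow_succ']
    have hRα' : R1^(m+1)*α' = 1-p := by rw [← hapow m]; exact hαα'
    have hα'R : α'*R1^(m+1) = 1-p := by rw [← hapow m]; exact hα'α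
    have hcm : R1^(m+1)*R1 = R1*R1^(m+1) := by rw [← pow_succ, ← pow_succ']
    have hcomm : α'*R1 = R1*α' := by
      calc α'*R1 = (α'*R1)*(1-p) := by rw [mul_assoc, hR1q]
      _ = (α'*R1)*(R1^(m+1)*α') := by rw [hRα']
      _ = α'*((R1*R1^(m+1))*α') := by noncomm_ring
      _ = α'*((R1^(m+1)*R1)*α') := by rw [← hcm]
      _ = (α'*R1^(m+1))*(R1*α') := by noncomm_ring
      _ = (1-p)*(R1*α') := by rw [hα'R]
      _ = ((1-p)*R1)*α' := by rw [← mul_assoc]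
      _ = R1*α' := by rw [hqR1]
    set y : A := R1^m*α' with hy
    have hyR : y*R1 = 1-p := by
      calc y*R1 = R1^m*(α'*R1) := by rw [hy, mul_assoc]
      _ = R1^m*(R1*α') := by rw [hcomm]
      _ = (R1^m*R1)*α' := by rw [← mul_assoc]
      _ = R1^(m+1)*α' := by rw [← pow_succ]
      _ = 1-p := hRα'
    have hRy : R1*y = 1-p := by
      calc R1*y = (R1*R1^m)*α' := by rw [hy, ← mul_assoc]
      _ = R1^(m+1)*α' := by rw [← pow_succ']
      _ = 1-p := hRα'
    have hyq : y*(1-p) = y := by rw [hy, mul_assoc, hα'q]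
    have hqy : (1-p)*y = y := by
      rcases Nat.eq_zero_or_pos m with hm0 | hm0
      · subst hm0
        rw [hy]
        simp only [pow_zero, one_mul]
        exact hqα'
      · obtain ⟨j, rfl⟩ : ∃ j, m = j+1 := ⟨m-1, by omega⟩
        rw [hy, ← mul_assoc, hqRk j]
    have hay : a*y = 1-p := by
      calc a*y = a*((1-p)*y) := by rw [hqy]
      _ = (a*(1-p))*y := by rw [← mul_assoc]
      _ = R1*y := by rw [haq]
      _ = 1-p := hRy
    have hyp : y*p = 0 := by
      have h := hyq
      rw [mul_sub, mul_one] at h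
      exact sub_eq_self.mp h
    have hya : y*a = (1-p) + y*((1-p)*a*p) := by
      have hdec : a = (1-p)*a*(1-p) + ((1-p)*a*p + p*a) := by noncomm_ring
      calc y*a = y*((1-p)*a*(1-p) + ((1-p)*a*p + p*a)) := by conv_lhs => rw [hdec]
      _ = y*R1 + (y*((1-p)*a*p) + y*(p*a)) := by rw [← hR1def, mul_add, mul_add]
      _ = (1-p) + (y*((1-p)*a*p) + (y*p)*a) := by rw [hyR, ← mul_assoc y p a]
      _ = (1-p) + y*((1-p)*a*p) := by rw [hyp, zero_mul, add_zero]
    refine ⟨y, ?_, ?_, ?_⟩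
    · rw [pow_two, ← mul_assoc, hay, hqy]
    · rw [hay, star_sub, star_one, hps]
    · refine (sd_iff (fun k => a^k - y*a^(k+1))).2 ?_
      have hC : (0:ℝ) ≤ (1 + ‖y*((1-p)*a)‖)*‖p*a‖ := by positivity
      apply sd_shift (fun k => (p*a)^k) _ _ hC hqsd
      intro k
      have h1 : y*a^(k+1+1) = (y*a)*a^(k+1) := by rw [pow_succ' a (k+1), ← mul_assoc]
      have hid : a^(k+1) - y*a^(k+1+1) = (p*a)^(k+1) - (y*((1-p)*a))*((p*a)^(k+1)) := by
        rw [h1, hya, hpak k]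
        generalize a^(k+1) = w
        noncomm_ring
      rw [hid]
      calc ‖(p*a)^(k+1) - (y*((1-p)*a))*((p*a)^(k+1))‖
          ≤ ‖(p*a)^(k+1)‖ + ‖(y*((1-p)*a))*((p*a)^(k+1))‖ := norm_sub_le _ _
      _ ≤ ‖(p*a)^(k+1)‖ + ‖y*((1-p)*a)‖*‖(p*a)^(k+1)‖ := by
          exact add_le_add le_rfl (norm_mul_le _ _)
      _ = (1 + ‖y*((1-p)*a)‖)*‖(p*a)^(k+1)‖ := by ring
      _ ≤ (1 + ‖y*((1-p)*a)‖)*(‖p*a‖*‖(p*a)^k‖) := by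
          refine mul_le_mul_of_nonneg_left ?_ (by positivity)
          rw [pow_succ']
          exact norm_mul_le _ _
      _ = ((1 + ‖y*((1-p)*a)‖)*‖p*a‖)*‖(p*a)^k‖ := by ring
end

section
/- Let A, W be n×n complex matrices and let X be a W-weighted core-EP inverse of A, i.e. A(WX)² = X, (WAWX)* = WAWX (where * is conjugate transpose), and lim_{k→∞} ‖(AW)ᵏ − XW(AW)^{k+1}‖^{1/k} = 0 (in the operator norm on n×n complex matrices). Then for every positive integer m, the matrix (WA)ᵐ + Iₙ − WAWX is invertible. -/
open Filter

variable {A : Type*} [NormedRing A] [NormedAlgebra ℂ A] [StarRing A] [StarModule ℂ A]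
  [CompleteSpace A]

attribute [local instance] Matrix.linftyOpNormedAddCommGroup Matrix.linftyOpNormedRing

private lemma kernel_unit' {n : ℕ} (T : Matrix (Fin n) (Fin n) ℂ)
    (h : ∀ V : Matrix (Fin n) (Fin n) ℂ, T * V = 0 → V = 0) : IsUnit T := by
  rw [Matrix.isUnit_iff_isUnit_det, isUnit_iff_ne_zero]
  intro hdet
  obtain ⟨v, hv, hv0⟩ := (Matrix.exists_mulVec_eq_zero_iff).mpr hdet
  have hV : T * (Matrix.of fun i _ : Fin n => v i) = 0 := by
    ext i j
    have h2 := congrFun hv0 i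
    simp only [Matrix.mulVec, dotProduct, Pi.zero_apply] at h2
    simp [Matrix.mul_apply, h2]
  have h0 := h _ hV
  apply hv
  funext i
  have h3 : (Matrix.of fun i _ : Fin n => v i) i i = (0 : Matrix (Fin n) (Fin n) ℂ) i i := by
    rw [h0]
  simpa using h3

private lemma aux_unit {n : ℕ} (b y : Matrix (Fin n) (Fin n) ℂ)
    (hy : b * (y * y) = y)
    (hdb : ∀ ε : ℝ, 0 < ε → ∀ᶠ k : ℕ in atTop, ‖b ^ k - y * b ^ (k + 1)‖ ≤ ε ^ k)
    (m : ℕ) (hm : 0 < m) :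
    IsUnit (b ^ m + 1 - b * y) := by
  -- basic power identities
  have hbyk : ∀ k : ℕ, b ^ k * y ^ (k + 1) = y := by
    intro k
    induction k with
    | zero => simp
    | succ k ih =>
      have hstep : b * y ^ (k + 2) = y ^ (k + 1) := by
        have e : b * y ^ (k + 2) = b * (y * y) * y ^ k := by
          rw [pow_succ' y (k+1), pow_succ' y k]; simp only [mul_assoc]
        rw [e, hy, ← pow_succ']
      calc b ^ (k + 1) * y ^ (k + 2) = b ^ k * (b * y ^ (k + 2)) := by
            rw [pow_succ, mul_assoc]
        _ = b ^ k * y ^ (k + 1) := by rw [hstep]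
        _ = y := ih
  have hbp : ∀ k : ℕ, b ^ (k + 1) * y ^ (k + 1) = b * y := by
    intro k
    rw [pow_succ' b k, mul_assoc, hbyk k]
  -- limit machinery
  have hdlim : ∀ C : ℝ, 0 < C →
      Tendsto (fun k : ℕ => ‖b ^ k - y * b ^ (k + 1)‖ * C ^ k) atTop (nhds 0) := by
    intro C hC
    have hε : (0:ℝ) < 1 / (2 * C) := by positivity
    refine squeeze_zero' (Eventually.of_forall fun k => by positivity) ?_
      (tendsto_pow_atTop_nhds_zero_of_lt_one (by norm_num) (by norm_num) :
        Tendsto (fun k : ℕ => (1/2 : ℝ) ^ k) atTop (nhds 0))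
    filter_upwards [hdb _ hε] with k hk
    calc ‖b ^ k - y * b ^ (k + 1)‖ * C ^ k ≤ (1 / (2 * C)) ^ k * C ^ k :=
          mul_le_mul_of_nonneg_right hk (pow_nonneg hC.le k)
      _ = (1/2 : ℝ) ^ k := by
          rw [← mul_pow]; congr 1; field_simp
  have key : ∀ (E : Matrix (Fin n) (Fin n) ℂ) (K C : ℝ), 0 < C →
      (∀ᶠ k : ℕ in atTop, ‖E‖ ≤ K * (‖b ^ k - y * b ^ (k + 1)‖ * C ^ k)) → E = 0 := by
    intro E K C hC hEv
    have h0 : Tendsto (fun k : ℕ => K * (‖b ^ k - y * b ^ (k + 1)‖ * C ^ k)) atTop (nhds 0) := by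
      simpa using (hdlim C hC).const_mul K
    exact norm_le_zero_iff.mp (ge_of_tendsto h0 hEv)
  -- I1 : y * b * y = y
  have hyby : y * b * y = y := by
    rw [← sub_eq_zero]
    apply key _ (‖y‖ + 1) (‖y‖ + 1) (by positivity)
    apply Eventually.of_forall
    intro k
    have hid : y * b * y - y = -((b ^ k - y * b ^ (k + 1)) * y ^ (k + 1)) := by
      rw [pow_succ' b k]
      calc y * b * y - y = y * b * (b ^ k * y ^ (k + 1)) - b ^ k * y ^ (k + 1) := by
            rw [hbyk k]
        _ = -((b ^ k - y * (b * b ^ k)) * y ^ (k + 1)) := by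
            generalize b ^ k = P
            generalize y ^ (k + 1) = Q
            noncomm_ring
    rw [hid, norm_neg]
    have hd1 : ‖(b ^ k - y * b ^ (k + 1)) * y ^ (k + 1)‖
        ≤ ‖b ^ k - y * b ^ (k + 1)‖ * ‖y‖ ^ (k + 1) :=
      le_trans (norm_mul_le _ _)
        (mul_le_mul_of_nonneg_left (norm_pow_le' y k.succ_pos) (norm_nonneg _))
    have hd2 : ‖y‖ ^ (k + 1) ≤ (‖y‖ + 1) ^ (k + 1) :=
      pow_le_pow_left₀ (norm_nonneg y) (by linarith) _
    calc ‖(b ^ k - y * b ^ (k + 1)) * y ^ (k + 1)‖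
        ≤ ‖b ^ k - y * b ^ (k + 1)‖ * (‖y‖ + 1) ^ (k + 1) := by
          refine le_trans hd1 ?_
          exact mul_le_mul_of_nonneg_left hd2 (norm_nonneg _)
      _ = (‖y‖ + 1) * (‖b ^ k - y * b ^ (k + 1)‖ * (‖y‖ + 1) ^ k) := by
          rw [pow_succ]; ring
  -- I2 : y * b * (b * y) = b * y
  have hybp : y * b * (b * y) = b * y := by
    rw [← sub_eq_zero]
    apply key _ 1 (‖y‖ + 1) (by positivity)
    filter_upwards [eventually_ge_atTop 1] with k hk1
    obtain ⟨j, rfl⟩ : ∃ j, k = j + 1 := ⟨k - 1, by omega⟩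
    have hid : y * b * (b * y) - b * y = -((b ^ (j + 1) - y * b ^ (j + 1 + 1)) * y ^ (j + 1)) := by
      rw [← hbp j, pow_succ' b (j + 1)]
      generalize b ^ (j + 1) = P
      generalize y ^ (j + 1) = Q
      noncomm_ring
    rw [hid, norm_neg]
    have hd1 : ‖(b ^ (j + 1) - y * b ^ (j + 1 + 1)) * y ^ (j + 1)‖
        ≤ ‖b ^ (j + 1) - y * b ^ (j + 1 + 1)‖ * ‖y‖ ^ (j + 1) :=
      le_trans (norm_mul_le _ _)
        (mul_le_mul_of_nonneg_left (norm_pow_le' y j.succ_pos) (norm_nonneg _))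
    have hd2 : ‖y‖ ^ (j + 1) ≤ (‖y‖ + 1) ^ (j + 1) :=
      pow_le_pow_left₀ (norm_nonneg y) (by linarith) _
    calc ‖(b ^ (j + 1) - y * b ^ (j + 1 + 1)) * y ^ (j + 1)‖
        ≤ ‖b ^ (j + 1) - y * b ^ (j + 1 + 1)‖ * (‖y‖ + 1) ^ (j + 1) :=
          le_trans hd1 (mul_le_mul_of_nonneg_left hd2 (norm_nonneg _))
      _ = 1 * (‖b ^ (j + 1) - y * b ^ (j + 1 + 1)‖ * (‖y‖ + 1) ^ (j + 1)) := by ring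
  -- idempotents
  have hpp : (b * y) * (b * y) = b * y := by
    calc (b * y) * (b * y) = b * (y * b * y) := by noncomm_ring
      _ = b * y := by rw [hyby]
  have hqp : (1 - b * y) * (b * y) = 0 := by
    rw [sub_mul, one_mul, hpp, sub_self]
  have hpbp : (b * y) * (b * (b * y)) = b * (b * y) := by
    calc (b * y) * (b * (b * y)) = b * (y * b * (b * y)) := by noncomm_ring
      _ = b * (b * y) := by rw [hybp]
  have hqbjp : ∀ j : ℕ, b ^ j * (b * y) = (b * y) * (b ^ j * (b * y)) := by
    intro j
    induction j with
    | zero => simpa using hpp.symm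
    | succ j ih =>
      calc b ^ (j + 1) * (b * y) = b ^ j * (b * (b * y)) := by rw [pow_succ, mul_assoc]
        _ = b ^ j * ((b * y) * (b * (b * y))) := by rw [hpbp]
        _ = (b ^ j * (b * y)) * (b * (b * y)) := by rw [← mul_assoc]
        _ = ((b * y) * (b ^ j * (b * y))) * (b * (b * y)) := by conv_lhs => rw [ih]
        _ = (b * y) * (b ^ j * ((b * y) * (b * (b * y)))) := by simp only [mul_assoc]
        _ = (b * y) * (b ^ j * (b * (b * y))) := by rw [hpbp]
        _ = (b * y) * (b ^ (j + 1) * (b * y)) := by simp only [pow_succ, mul_assoc]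
  have hzap : ∀ j : ℕ, (1 - b * y) * (b ^ j * (b * y)) = 0 := by
    intro j
    conv_lhs => rw [hqbjp j]
    rw [← mul_assoc, hqp, zero_mul]
  -- powers of N = (1 - b*y) * b^m
  have hNpow : ∀ k : ℕ, ((1 - b * y) * b ^ m) ^ (k + 1) = (1 - b * y) * b ^ (m * (k + 1)) := by
    intro k
    induction k with
    | zero => rw [pow_one, Nat.mul_one]
    | succ k ih =>
      calc ((1 - b * y) * b ^ m) ^ (k + 1 + 1)
          = ((1 - b * y) * b ^ (m * (k + 1))) * ((1 - b * y) * b ^ m) := by rw [pow_succ, ih]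
        _ = (1 - b * y) * (b ^ (m * (k + 1)) * b ^ m)
            - ((1 - b * y) * (b ^ (m * (k + 1)) * (b * y))) * b ^ m := by
              generalize b ^ (m * (k + 1)) = B
              generalize b ^ m = c
              noncomm_ring
        _ = (1 - b * y) * (b ^ (m * (k + 1)) * b ^ m) := by rw [hzap, zero_mul, sub_zero]
        _ = (1 - b * y) * b ^ (m * (k + 1 + 1)) := by
              have he : m * (k + 1) + m = m * (k + 1 + 1) := by ring
              rw [← pow_add, he]
  -- a power of N has norm < 1
  have hd0 : Tendsto (fun j : ℕ => ‖b ^ j - y * b ^ (j + 1)‖) atTop (nhds 0) := by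
    simpa using hdlim 1 one_pos
  obtain ⟨J, hJ⟩ := eventually_atTop.mp
    (hd0.eventually_lt_const (show (0:ℝ) < 1 / (‖b‖ + 1) by positivity))
  obtain ⟨j, hj1, hj2⟩ : ∃ j, m * (J + 1) = j + 1 ∧ J ≤ j := by
    have h1' : J + 1 ≤ m * (J + 1) := Nat.le_mul_of_pos_left _ hm
    exact ⟨m * (J + 1) - 1, by omega, by omega⟩
  have hqbn : (1 - b * y) * b ^ (j + 1) = b * (b ^ j - y * b ^ (j + 1)) := by
    rw [pow_succ' b j]
    generalize b ^ j = P
    noncomm_ring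
  have hNk : ‖((1 - b * y) * b ^ m) ^ (J + 1)‖ < 1 := by
    rw [hNpow J, hj1, hqbn]
    have h4 := hJ j hj2
    have h5 : (0:ℝ) ≤ ‖b‖ := norm_nonneg b
    have h6 : (0:ℝ) ≤ ‖b ^ j - y * b ^ (j + 1)‖ := norm_nonneg _
    have h7 : (‖b‖ + 1) * ‖b ^ j - y * b ^ (j + 1)‖ < (‖b‖ + 1) * (1 / (‖b‖ + 1)) :=
      mul_lt_mul_of_pos_left h4 (by positivity)
    rw [mul_one_div, div_self (by positivity : ‖b‖ + (1:ℝ) ≠ 0)] at h7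
    calc ‖b * (b ^ j - y * b ^ (j + 1))‖ ≤ ‖b‖ * ‖b ^ j - y * b ^ (j + 1)‖ := norm_mul_le _ _
      _ < 1 := by nlinarith
  -- IsUnit (1 + N)
  have hNunit : IsUnit (1 + (1 - b * y) * b ^ m) := by
    set x : Matrix (Fin n) (Fin n) ℂ := -((1 - b * y) * b ^ m) with hx
    have hxnorm : ‖x ^ (J + 1)‖ < 1 := by
      rcases Nat.even_or_odd (J + 1) with he | ho
      · rw [hx, he.neg_pow]; exact hNk
      · rw [hx, ho.neg_pow, norm_neg]; exact hNk
    have hTunit : IsUnit (1 - x ^ (J + 1)) := by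
      apply kernel_unit'
      intro V hV
      rw [sub_mul, one_mul, sub_eq_zero] at hV
      have hnV : ‖V‖ ≤ ‖x ^ (J + 1)‖ * ‖V‖ := by
        conv_lhs => rw [hV]
        exact norm_mul_le _ _
      have h8 : ‖V‖ ≤ 0 := by nlinarith [norm_nonneg V]
      exact norm_le_zero_iff.mp h8
    obtain ⟨G, hG⟩ := hTunit
    have hfac : ((↑G⁻¹ : Matrix (Fin n) (Fin n) ℂ) * ∑ i ∈ Finset.range (J + 1), x ^ i)
        * (1 - x) = 1 := by
      rw [mul_assoc, geom_sum_mul_neg, ← hG, Units.inv_mul]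
    have h9 : IsUnit (1 - x) := (Matrix.isUnit_iff_isUnit_det _).mpr (Matrix.isUnit_det_of_left_inverse hfac)
    rw [hx, sub_neg_eq_add] at h9
    exact h9
  -- main kernel argument
  apply kernel_unit'
  intro V hV
  obtain ⟨m', rfl⟩ : ∃ m', m = m' + 1 := ⟨m - 1, by omega⟩
  have heq : b ^ (m' + 1) * V = (b * y) * V - V := by
    rw [sub_mul, add_mul, one_mul, sub_eq_zero] at hV
    exact eq_sub_of_add_eq hV
  have hymp : y ^ (m' + 1) * (b * y) = y ^ (m' + 1) := by
    calc y ^ (m' + 1) * (b * y) = y ^ m' * (y * b * y) := by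
          simp only [pow_succ, mul_assoc]
      _ = y ^ m' * y := by rw [hyby]
      _ = y ^ (m' + 1) := (pow_succ y m').symm
  have hybm : y ^ (m' + 1) * (b ^ (m' + 1) * V) = 0 := by
    calc y ^ (m' + 1) * (b ^ (m' + 1) * V) = y ^ (m' + 1) * ((b * y) * V - V) := by rw [heq]
      _ = (y ^ (m' + 1) * (b * y)) * V - y ^ (m' + 1) * V := by simp only [mul_sub, ← mul_assoc]
      _ = 0 := by rw [hymp, sub_self]
  have hpbm : (b * y) * (b ^ (m' + 1) * V) = 0 := by
    calc (b * y) * (b ^ (m' + 1) * V)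
        = b ^ (m' + 1) * (y ^ (m' + 1) * (b ^ (m' + 1) * V)) := by
          conv_lhs => rw [← hbp m']
          simp only [mul_assoc]
      _ = 0 := by rw [hybm, mul_zero]
  have e1 : (1 - b * y) * (b ^ (m' + 1) * V) = b ^ (m' + 1) * V := by
    rw [sub_mul, one_mul, hpbm, sub_zero]
  have e2 : (1 - b * y) * (b ^ (m' + 1) * ((b * y) * V)) = 0 := by
    calc (1 - b * y) * (b ^ (m' + 1) * ((b * y) * V))
        = ((1 - b * y) * (b ^ (m' + 1) * (b * y))) * V := by simp only [mul_assoc]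
      _ = 0 := by rw [hzap, zero_mul]
  have h5 : (1 + (1 - b * y) * b ^ (m' + 1)) * (V - (b * y) * V) = 0 := by
    calc (1 + (1 - b * y) * b ^ (m' + 1)) * (V - (b * y) * V)
        = (V - (b * y) * V) + ((1 - b * y) * (b ^ (m' + 1) * V)
            - (1 - b * y) * (b ^ (m' + 1) * ((b * y) * V))) := by
          generalize b ^ (m' + 1) = B
          noncomm_ring
      _ = (V - (b * y) * V) + (b ^ (m' + 1) * V - 0) := by rw [e1, e2]
      _ = (V - (b * y) * V) + (((b * y) * V - V) - 0) := by rw [heq]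
      _ = 0 := by abel
  have hV20 : V - (b * y) * V = 0 := by
    obtain ⟨G, hG⟩ := hNunit
    calc V - (b * y) * V = ((↑G⁻¹ : Matrix (Fin n) (Fin n) ℂ) * ↑G) * (V - (b * y) * V) := by
          rw [Units.inv_mul, one_mul]
      _ = (↑G⁻¹ : Matrix (Fin n) (Fin n) ℂ)
          * ((1 + (1 - b * y) * b ^ (m' + 1)) * (V - (b * y) * V)) := by rw [hG, mul_assoc]
      _ = 0 := by rw [h5, mul_zero]
  have hpV : (b * y) * V = V := (sub_eq_zero.mp hV20).symm
  have hbmV : b ^ (m' + 1) * V = 0 := by rw [heq, hpV, sub_self]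
  have desc : ∀ j : ℕ, b ^ j * V = 0 → V = 0 := by
    intro j
    induction j with
    | zero => intro h0; simpa using h0
    | succ j ih =>
      intro h0
      apply ih
      have e3 : b ^ j * V = (b * y) * (b ^ j * V) := by
        calc b ^ j * V = b ^ j * ((b * y) * V) := by rw [hpV]
          _ = (b ^ j * (b * y)) * V := by rw [← mul_assoc]
          _ = ((b * y) * (b ^ j * (b * y))) * V := by conv_lhs => rw [hqbjp j]
          _ = (b * y) * (b ^ j * ((b * y) * V)) := by simp only [mul_assoc]
          _ = (b * y) * (b ^ j * V) := by rw [hpV]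
      calc b ^ j * V = (b * y) * (b ^ j * V) := e3
        _ = ((y * b) * (b * y)) * (b ^ j * V) := by
            conv_lhs => rw [← hybp]
        _ = (y * b) * ((b * y) * (b ^ j * V)) := by rw [mul_assoc]
        _ = (y * b) * (b ^ j * V) := by rw [← e3]
        _ = y * (b ^ (j + 1) * V) := by simp only [pow_succ', mul_assoc]
        _ = 0 := by rw [h0, mul_zero]
  exact desc (m' + 1) hbmV

/-- Corollary 3.8. -/
theorem matrix_pow_add_one_sub_isUnit (n : ℕ) (M W X : Matrix (Fin n) (Fin n) ℂ)
    (h1 : M * (W * X) ^ 2 = X) (h2 : star (W * M * W * X) = W * M * W * X)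
    (h3 : Filter.Tendsto
      (fun k : ℕ => ‖(M * W) ^ k - X * W * (M * W) ^ (k + 1)‖ ^ (1 / (k : ℝ)))
      Filter.atTop (nhds 0))
    (m : ℕ) (hm : 0 < m) :
    IsUnit ((W * M) ^ m + 1 - W * M * W * X) := by
  have hy : (W * M) * ((W * X) * (W * X)) = W * X := by
    calc (W * M) * ((W * X) * (W * X)) = W * (M * (W * X) ^ 2) := by noncomm_ring
      _ = W * X := by rw [h1]
  have hcomm : ∀ k : ℕ, W * (M * W) ^ k = (W * M) ^ k * W := by
    intro k
    induction k with
    | zero => simp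
    | succ k ih =>
      calc W * (M * W) ^ (k + 1) = (W * (M * W) ^ k) * (M * W) := by
            rw [pow_succ, ← mul_assoc]
        _ = ((W * M) ^ k * W) * (M * W) := by rw [ih]
        _ = (W * M) ^ (k + 1) * W := by simp only [pow_succ, mul_assoc]
  have hd_id : ∀ k : ℕ, (W * M) ^ (k + 1) - (W * X) * (W * M) ^ (k + 1 + 1)
      = W * ((M * W) ^ k - X * W * (M * W) ^ (k + 1)) * M := by
    intro k
    rw [mul_sub, sub_mul]
    congr 1
    · exact (calc W * (M * W) ^ k * M = ((W * M) ^ k * W) * M := by rw [hcomm]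
        _ = (W * M) ^ (k + 1) := by rw [pow_succ, mul_assoc]).symm
    · exact (calc W * (X * W * (M * W) ^ (k + 1)) * M
          = (W * X) * ((W * (M * W) ^ (k + 1)) * M) := by simp only [mul_assoc]
        _ = (W * X) * (((W * M) ^ (k + 1) * W) * M) := by rw [hcomm]
        _ = (W * X) * (W * M) ^ (k + 1 + 1) := by simp only [pow_succ, mul_assoc]).symm
  have hdb : ∀ ε : ℝ, 0 < ε →
      ∀ᶠ k : ℕ in atTop, ‖(W * M) ^ k - (W * X) * (W * M) ^ (k + 1)‖ ≤ ε ^ k := by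
    intro ε hε
    have hc : ∀ᶠ k : ℕ in atTop, ‖(M * W) ^ k - X * W * (M * W) ^ (k + 1)‖ ≤ (ε / 2) ^ k := by
      have hev : ∀ᶠ k : ℕ in atTop,
          ‖(M * W) ^ k - X * W * (M * W) ^ (k + 1)‖ ^ (1 / (k : ℝ)) < ε / 2 :=
        h3.eventually_lt_const (by positivity)
      filter_upwards [hev, eventually_ge_atTop 1] with k hk hk1
      have hnn : (0:ℝ) ≤ ‖(M * W) ^ k - X * W * (M * W) ^ (k + 1)‖ := norm_nonneg _
      have hkk : (k : ℝ) ≠ 0 := by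
        have : (0:ℕ) < k := hk1
        exact_mod_cast this.ne'
      have e : (‖(M * W) ^ k - X * W * (M * W) ^ (k + 1)‖ ^ (1 / (k : ℝ))) ^ (k : ℕ)
          = ‖(M * W) ^ k - X * W * (M * W) ^ (k + 1)‖ := by
        rw [← Real.rpow_natCast (_ ^ (1 / (k : ℝ))) k, ← Real.rpow_mul hnn, one_div,
          inv_mul_cancel₀ hkk, Real.rpow_one]
      calc ‖(M * W) ^ k - X * W * (M * W) ^ (k + 1)‖
          = (‖(M * W) ^ k - X * W * (M * W) ^ (k + 1)‖ ^ (1 / (k : ℝ))) ^ (k : ℕ) := e.symm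
        _ ≤ (ε / 2) ^ k := pow_le_pow_left₀ (Real.rpow_nonneg hnn _) hk.le k
    have hsh : ∀ᶠ k : ℕ in atTop,
        ‖(W * M) ^ (k + 1) - (W * X) * (W * M) ^ (k + 1 + 1)‖ ≤ ε ^ (k + 1) := by
      have h2k : ∀ᶠ k : ℕ in atTop, ‖W‖ * ‖M‖ ≤ ε * 2 ^ k := by
        have ht := (tendsto_pow_atTop_atTop_of_one_lt
          (show (1:ℝ) < 2 by norm_num)).eventually_ge_atTop ((‖W‖ * ‖M‖) / ε)
        filter_upwards [ht] with k hk
        rw [div_le_iff₀ hε] at hk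
        linarith
      filter_upwards [hc, h2k] with k hk hk2
      rw [hd_id k]
      have hcn : (0:ℝ) ≤ ‖(M * W) ^ k - X * W * (M * W) ^ (k + 1)‖ := norm_nonneg _
      calc ‖W * ((M * W) ^ k - X * W * (M * W) ^ (k + 1)) * M‖
          ≤ ‖W‖ * ‖(M * W) ^ k - X * W * (M * W) ^ (k + 1)‖ * ‖M‖ :=
            le_trans (norm_mul_le _ _)
              (mul_le_mul_of_nonneg_right (norm_mul_le _ _) (norm_nonneg M))
        _ = (‖W‖ * ‖M‖) * ‖(M * W) ^ k - X * W * (M * W) ^ (k + 1)‖ := by ring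
        _ ≤ (ε * 2 ^ k) * (ε / 2) ^ k :=
            mul_le_mul hk2 hk hcn (by positivity)
        _ = ε ^ (k + 1) := by
            rw [div_pow, pow_succ]
            field_simp
    rw [eventually_atTop] at hsh ⊢
    obtain ⟨K, hK⟩ := hsh
    refine ⟨K + 1, fun k hk => ?_⟩
    obtain ⟨j, rfl⟩ : ∃ j, k = j + 1 := ⟨k - 1, by omega⟩
    exact hK j (by omega)
  have hgoal := aux_unit (W * M) (W * X) hy hdb m hm
  have hassoc : W * M * W * X = (W * M) * (W * X) := by simp only [mul_assoc]
  rw [hassoc]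
  exact hgoal
end

section
/- Let a ∈ 𝒜. Then a has a generalized w-weighted core-EP inverse if and only if a has a w-weighted g-Drazin inverse and there exists x ∈ 𝒜 such that a(wx)² = x, (wawx)* = wawx, and lim_{n→∞} ‖(aw)ⁿ − (aw)(xw)(aw)ⁿ‖^{1/n} = 0. In this case a^{⊛d,w} = x. -/
open Filter

section SmHelpers
variable {A : Type*} [NormedRing A]

lemma aux_div (M ε : ℝ) (hM : 0 ≤ M) (hε : 0 ≤ ε) : M * (ε / (2 * (M + 1))) ≤ ε / 2 := by
  rw [show M * (ε / (2 * (M + 1))) = M * ε / (2 * (M + 1)) from (mul_div_assoc _ _ _).symm,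
    div_le_div_iff₀ (by positivity) two_pos]
  nlinarith

/-- superpolynomially small sequence -/
def SmSeq (u : ℕ → A) : Prop := ∀ ε : ℝ, 0 < ε → ∀ᶠ n in atTop, ‖u n‖ ≤ ε ^ n

lemma smSeq_of_tendsto {u : ℕ → A}
    (h : Tendsto (fun n : ℕ => ‖u n‖ ^ (1 / (n : ℝ))) atTop (nhds 0)) : SmSeq u := by
  intro ε hε
  filter_upwards [h.eventually (gt_mem_nhds hε), eventually_ge_atTop 1] with n hn hn1
  have hne : (n : ℝ) ≠ 0 := Nat.cast_ne_zero.2 (by omega)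
  have key : (‖u n‖ ^ (1 / (n : ℝ))) ^ (n : ℕ) = ‖u n‖ := by
    rw [← Real.rpow_natCast (‖u n‖ ^ (1 / (n : ℝ))) n, ← Real.rpow_mul (norm_nonneg _),
      one_div, inv_mul_cancel₀ hne, Real.rpow_one]
  calc ‖u n‖ = (‖u n‖ ^ (1 / (n : ℝ))) ^ (n : ℕ) := key.symm
    _ ≤ ε ^ n := pow_le_pow_left₀ (Real.rpow_nonneg (norm_nonneg _) _) hn.le n

lemma SmSeq.tendsto {u : ℕ → A} (h : SmSeq u) :
    Tendsto (fun n : ℕ => ‖u n‖ ^ (1 / (n : ℝ))) atTop (nhds 0) := by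
  rw [Metric.tendsto_atTop]
  intro ε hε
  obtain ⟨N, hN⟩ := (eventually_atTop.1 ((h (ε / 2) (half_pos hε)).and (eventually_ge_atTop 1)))
  refine ⟨N, fun n hn => ?_⟩
  obtain ⟨hb, hn1⟩ := hN n hn
  have hne : (n : ℝ) ≠ 0 := Nat.cast_ne_zero.2 (by omega)
  have h0 : (0:ℝ) ≤ ‖u n‖ ^ (1 / (n : ℝ)) := Real.rpow_nonneg (norm_nonneg _) _
  have key : ((ε / 2) ^ (n : ℕ)) ^ (1 / (n : ℝ)) = ε / 2 := by
    rw [← Real.rpow_natCast (ε / 2) n, ← Real.rpow_mul (half_pos hε).le,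
      mul_one_div, div_self hne, Real.rpow_one]
  have : ‖u n‖ ^ (1 / (n : ℝ)) ≤ ε / 2 := by
    calc ‖u n‖ ^ (1 / (n : ℝ)) ≤ ((ε / 2) ^ (n : ℕ)) ^ (1 / (n : ℝ)) :=
          Real.rpow_le_rpow (norm_nonneg _) hb (by positivity)
      _ = ε / 2 := key
  rw [Real.dist_eq, sub_zero, abs_of_nonneg h0]
  linarith

lemma SmSeq.congr' {u v : ℕ → A} (h : SmSeq u) (he : ∀ᶠ n in atTop, v n = u n) : SmSeq v := by
  intro ε hε
  filter_upwards [h ε hε, he] with n h1 h2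
  rw [h2]; exact h1

lemma SmSeq.congr {u v : ℕ → A} (h : SmSeq u) (he : ∀ n, v n = u n) : SmSeq v :=
  h.congr' (Eventually.of_forall he)

lemma SmSeq.of_le {u v : ℕ → A} (h : SmSeq u) (C M : ℝ) (hM : 0 ≤ M)
    (hle : ∀ᶠ n in atTop, ‖v n‖ ≤ C * M ^ n * ‖u n‖) : SmSeq v := by
  intro ε hε
  set C' : ℝ := max C 1 with hC'
  have hC1 : (1:ℝ) ≤ C' := le_max_right _ _
  have hC0 : (0:ℝ) < C' := lt_of_lt_of_le one_pos hC1
  have hε' : 0 < ε / (2 * (M + 1)) := by positivity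
  have h2 : Tendsto (fun n : ℕ => (2:ℝ) ^ n) atTop atTop :=
    tendsto_pow_atTop_atTop_of_one_lt one_lt_two
  filter_upwards [h _ hε', hle, h2.eventually_ge_atTop C'] with n h1 h3 h4
  have hMn : (0:ℝ) ≤ M ^ n := pow_nonneg hM n
  calc ‖v n‖ ≤ C * M ^ n * ‖u n‖ := h3
    _ ≤ C' * M ^ n * ‖u n‖ := by
        have := mul_nonneg hMn (norm_nonneg (u n))
        nlinarith [le_max_left C 1]
    _ ≤ C' * M ^ n * (ε / (2 * (M + 1))) ^ n := by
        have : (0:ℝ) ≤ C' * M ^ n := mul_nonneg hC0.le hMn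
        exact mul_le_mul_of_nonneg_left h1 this
    _ = C' * (M * (ε / (2 * (M + 1)))) ^ n := by rw [mul_pow, mul_assoc]
    _ ≤ C' * (ε / 2) ^ n := by
        refine mul_le_mul_of_nonneg_left (pow_le_pow_left₀ (by positivity) ?_ n) hC0.le
        exact aux_div M ε hM hε.le
    _ ≤ 2 ^ n * (ε / 2) ^ n := mul_le_mul_of_nonneg_right h4 (by positivity)
    _ = ε ^ n := by rw [← mul_pow]; ring_nf

lemma SmSeq.add {u v : ℕ → A} (hu : SmSeq u) (hv : SmSeq v) : SmSeq (fun n => u n + v n) := by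
  intro ε hε
  filter_upwards [hu (ε/2) (half_pos hε), hv (ε/2) (half_pos hε), eventually_ge_atTop 1,
    (tendsto_pow_atTop_atTop_of_one_lt (one_lt_two (α := ℝ))).eventually_ge_atTop 2] with n h1 h2 hn1 h4
  calc ‖u n + v n‖ ≤ ‖u n‖ + ‖v n‖ := norm_add_le _ _
    _ ≤ (ε/2)^n + (ε/2)^n := add_le_add h1 h2
    _ = 2 * (ε/2)^n := by ring
    _ ≤ 2^n * (ε/2)^n := mul_le_mul_of_nonneg_right h4 (by positivity)
    _ = ε ^ n := by rw [← mul_pow]; ring_nf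

lemma SmSeq.neg {u : ℕ → A} (hu : SmSeq u) : SmSeq (fun n => -u n) := by
  intro ε hε; filter_upwards [hu ε hε] with n h1; rw [norm_neg]; exact h1

lemma SmSeq.sub {u v : ℕ → A} (hu : SmSeq u) (hv : SmSeq v) : SmSeq (fun n => u n - v n) :=
  ((hu.add hv.neg).congr (fun n => sub_eq_add_neg _ _))

lemma SmSeq.const_mul {u : ℕ → A} (hu : SmSeq u) (r : A) : SmSeq (fun n => r * u n) :=
  hu.of_le ‖r‖ 1 zero_le_one (Eventually.of_forall (fun n => by
    simp only [one_pow, mul_one]; exact norm_mul_le r (u n)))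

lemma SmSeq.mul_const {u : ℕ → A} (hu : SmSeq u) (r : A) : SmSeq (fun n => u n * r) :=
  hu.of_le ‖r‖ 1 zero_le_one (Eventually.of_forall (fun n => by
    simp only [one_pow, mul_one]
    calc ‖u n * r‖ ≤ ‖u n‖ * ‖r‖ := norm_mul_le _ _
      _ = ‖r‖ * ‖u n‖ := mul_comm _ _))

lemma SmSeq.shift {u : ℕ → A} (hu : SmSeq u) : SmSeq (fun n => u (n + 1)) := by
  intro ε hε
  have hε' : 0 < min ε 1 := lt_min hε one_pos
  obtain ⟨N, hN⟩ := eventually_atTop.1 (hu _ hε')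
  rw [eventually_atTop]
  refine ⟨N, fun n hn => ?_⟩
  have h1 : ‖u (n+1)‖ ≤ (min ε 1) ^ (n+1) := hN _ (by omega)
  calc ‖u (n+1)‖ ≤ (min ε 1) ^ (n+1) := h1
    _ ≤ (min ε 1) ^ n :=
        pow_le_pow_of_le_one hε'.le (min_le_right ε 1) (Nat.le_succ n)
    _ ≤ ε ^ n := pow_le_pow_left₀ hε'.le (min_le_left _ _) n

lemma SmSeq.exists_bound {u : ℕ → A} (hu : SmSeq u) {ε : ℝ} (hε : 0 < ε) :
    ∃ C : ℝ, 1 ≤ C ∧ ∀ n, ‖u n‖ ≤ C * ε ^ n := by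
  obtain ⟨N, hN⟩ := eventually_atTop.1 (hu ε hε)
  refine ⟨1 + ∑ k ∈ Finset.range N, ‖u k‖ / ε ^ k,
    le_add_of_nonneg_right (Finset.sum_nonneg fun k _ => by positivity), fun n => ?_⟩
  by_cases hn : N ≤ n
  · have h1 : ‖u n‖ ≤ ε ^ n := hN n hn
    have h2 : (0:ℝ) ≤ ∑ k ∈ Finset.range N, ‖u k‖ / ε ^ k :=
      Finset.sum_nonneg (fun k _ => by positivity)
    nlinarith [pow_pos hε n]
  · have hmem : n ∈ Finset.range N := Finset.mem_range.2 (by omega)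
    have h1 : ‖u n‖ / ε ^ n ≤ ∑ k ∈ Finset.range N, ‖u k‖ / ε ^ k :=
      Finset.single_le_sum (f := fun k => ‖u k‖ / ε ^ k) (fun k _ => by positivity) hmem
    rw [div_le_iff₀ (pow_pos hε n)] at h1
    nlinarith [pow_pos hε n]

lemma smSeq_of_bound {v : ℕ → A} (h : ∀ ε : ℝ, 0 < ε → ∃ K : ℝ, ∀ n, ‖v n‖ ≤ K * ε ^ n) :
    SmSeq v := by
  intro ε hε
  obtain ⟨K, hK⟩ := h (ε/2) (half_pos hε)
  filter_upwards [(tendsto_pow_atTop_atTop_of_one_lt (one_lt_two (α := ℝ))).eventually_ge_atTop K]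
    with n h4
  calc ‖v n‖ ≤ K * (ε/2) ^ n := hK n
    _ ≤ 2^n * (ε/2)^n := mul_le_mul_of_nonneg_right h4 (by positivity)
    _ = ε ^ n := by rw [← mul_pow]; ring_nf

lemma eq_zero_of_smSeq {z : A} {u : ℕ → A} (hu : SmSeq u) (K M : ℝ) (hK : 0 ≤ K) (hM : 0 ≤ M)
    (h : ∀ j, ‖z‖ ≤ ‖u j‖ * (K * M ^ j)) : z = 0 := by
  have hε : (0:ℝ) < 1 / (2 * (M + 1)) := by positivity
  have hMε : M * (1 / (2 * (M + 1))) ≤ 1/2 := by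
    simpa using aux_div M 1 hM zero_le_one
  have htend : Tendsto (fun j : ℕ => K * (1/2 : ℝ) ^ j) atTop (nhds 0) := by
    have := tendsto_pow_atTop_nhds_zero_of_lt_one (by norm_num : (0:ℝ) ≤ 1/2) (by norm_num : (1/2:ℝ) < 1)
    simpa using this.const_mul K
  have hev : ∀ᶠ j in atTop, ‖z‖ ≤ K * (1/2:ℝ) ^ j := by
    filter_upwards [hu _ hε] with j h1
    calc ‖z‖ ≤ ‖u j‖ * (K * M ^ j) := h j
      _ ≤ (1 / (2 * (M + 1))) ^ j * (K * M ^ j) := by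
          exact mul_le_mul_of_nonneg_right h1 (by positivity)
      _ = K * (M * (1 / (2 * (M + 1)))) ^ j := by rw [mul_pow]; ring
      _ ≤ K * (1/2:ℝ) ^ j := by
          exact mul_le_mul_of_nonneg_left (pow_le_pow_left₀ (by positivity) hMε j) hK
  have : ‖z‖ ≤ 0 := ge_of_tendsto htend hev
  simpa using le_antisymm this (norm_nonneg z)

end SmHelpers



section PureRing
variable {R : Type*} [Ring R]

/-- The sequence `qⱼ = bʲ - b y bʲ`. -/
def qs (b y : R) (j : ℕ) : R := b ^ j - b * (y * b ^ j)

variable {b y : R}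

lemma hF5' (h1 : b * (y * y) = y) (t : R) : b * (y * (y * t)) = y * t := by
  rw [← mul_assoc y y t, ← mul_assoc b (y * y) t, h1]

lemma hE1' (h1 : b * (y * y) = y) : ∀ n : ℕ, b ^ n * y ^ (n + 1) = y := by
  intro n; induction n with
  | zero => simp
  | succ n ih =>
    have h5 : b * y ^ (n + 2) = y ^ (n + 1) := by
      calc b * y ^ (n + 2) = b * (y * (y * y ^ n)) := by
            rw [pow_succ' y (n + 1), pow_succ' y n]
        _ = y * y ^ n := hF5' h1 (y ^ n)
        _ = y ^ (n + 1) := (pow_succ' y n).symm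
    calc b ^ (n + 1) * y ^ (n + 2) = b ^ n * (b * y ^ (n + 2)) := by
          rw [pow_succ b n, mul_assoc]
      _ = b ^ n * y ^ (n + 1) := by rw [h5]
      _ = y := ih

lemma hbp' (hE2 : b * y = y * (b * (b * y))) : b * (b * y) = (b * y) * (b * (b * y)) := by
  conv_lhs => rw [hE2]
  rw [← mul_assoc b y (b * (b * y))]

lemma hr' (h1 : b * (y * y) = y) (hE2 : b * y = y * (b * (b * y))) :
    ∀ j, (b * y) * (b ^ j * y) = b ^ j * y := by
  intro j; induction j with
  | zero => simp only [pow_zero, one_mul]; rw [mul_assoc, h1]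
  | succ j ih =>
    have step1 : b ^ (j + 1) * y = b * ((b * y) * (b ^ j * y)) := by
      rw [pow_succ' b j, mul_assoc, ih]
    calc (b * y) * (b ^ (j + 1) * y) = (b * y) * (b * ((b * y) * (b ^ j * y))) := by rw [step1]
      _ = ((b * y) * (b * (b * y))) * (b ^ j * y) := by noncomm_ring
      _ = (b * (b * y)) * (b ^ j * y) := by rw [← hbp' hE2]
      _ = b * ((b * y) * (b ^ j * y)) := by rw [mul_assoc]
      _ = b ^ (j + 1) * y := by rw [ih, pow_succ' b j, mul_assoc]

lemma F_qy (h1 : b * (y * y) = y) (hE2 : b * y = y * (b * (b * y))) (j : ℕ) :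
    qs b y j * y = 0 := by
  unfold qs
  have h : (b ^ j - b * (y * b ^ j)) * y = b ^ j * y - (b * y) * (b ^ j * y) := by noncomm_ring
  rw [h, hr' h1 hE2 j, sub_self]

lemma F_yq (hE3 : y * (b * y) = y) (j : ℕ) : y * qs b y j = 0 := by
  have hA3 : ∀ t : R, y * (b * (y * t)) = y * t := fun t => by
    rw [← mul_assoc b y t, ← mul_assoc y (b * y) t, hE3]
  unfold qs
  have h : y * (b ^ j - b * (y * b ^ j)) = y * b ^ j - y * (b * (y * b ^ j)) := by noncomm_ring
  rw [h, hA3, sub_self]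

lemma F_qb (j : ℕ) : qs b y j * b = qs b y (j + 1) := by
  unfold qs; rw [pow_succ b j]; noncomm_ring

lemma F_qbk (j : ℕ) : ∀ k, qs b y j * b ^ k = qs b y (j + k) := by
  intro k; induction k with
  | zero => simp
  | succ k ih => rw [pow_succ, ← mul_assoc, ih, F_qb]; rfl

lemma F_qq (h1 : b * (y * y) = y) (hE2 : b * y = y * (b * (b * y))) (j k : ℕ) :
    qs b y j * qs b y k = qs b y (j + k) := by
  have expand : qs b y j * qs b y k = qs b y j * b ^ k - ((qs b y j * b) * y) * b ^ k := by
    unfold qs; noncomm_ring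
  rw [expand, F_qbk, F_qb, F_qy h1 hE2, zero_mul, sub_zero]

lemma F_by (h1 : b * (y * y) = y) (j : ℕ) (t : R) : b * (y ^ (j + 2) * t) = y ^ (j + 1) * t := by
  have h : y ^ (j + 2) * t = y * (y * (y ^ j * t)) := by
    rw [pow_succ' y (j + 1), pow_succ' y j, mul_assoc, mul_assoc]
  rw [h, hF5' h1 (y ^ j * t), ← mul_assoc, ← pow_succ']

lemma F_yf (j : ℕ) (t : R) : y * (y ^ (j + 1) * t) = y ^ (j + 2) * t := by
  rw [← mul_assoc, ← pow_succ']

lemma F_qyt (h1 : b * (y * y) = y) (hE2 : b * y = y * (b * (b * y))) (j m : ℕ) (t : R) :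
    qs b y j * (y ^ (m + 1) * t) = 0 := by
  rw [pow_succ' y m, mul_assoc y (y ^ m) t, ← mul_assoc (qs b y j) y (y ^ m * t),
    F_qy h1 hE2, zero_mul]

lemma F_fby (h1 : b * (y * y) = y) (hE2 : b * y = y * (b * (b * y))) (j : ℕ) :
    (y ^ (j + 2) * (b * qs b y j)) * (b * y) = 0 := by
  have h : (y ^ (j + 2) * (b * qs b y j)) * (b * y)
      = y ^ (j + 2) * (b * ((qs b y j * b) * y)) := by noncomm_ring
  rw [h, F_qb, F_qy h1 hE2, mul_zero, mul_zero]

lemma qs_eq (h1 : b * (y * y) = y) (j : ℕ) :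
    qs b y j = (1 - b * y) * (b ^ j - y * b ^ (j + 1)) := by
  have h : (1 - b * y) * (b ^ j - y * b ^ (j + 1))
      = b ^ j - b * (y * b ^ j) - (y * b ^ (j + 1) - b * (y * (y * b ^ (j + 1)))) := by
    noncomm_ring
  rw [h, hF5' h1 (b ^ (j + 1)), sub_self, sub_zero]; rfl

lemma qs_zero : qs b y 0 = 1 - b * y := by unfold qs; simp

end PureRing

section Analytic
variable {A : Type*} [NormedRing A]

lemma pSm_of_qSm (b y e : A) (hcomm : b * e = e * b) (he : e * (b * e) = e)
    (hc : SmSeq (fun n => (b - b * (b * e)) ^ n)) (h1 : b * (y * y) = y)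
    (hq : SmSeq (fun n => b ^ n - b * (y * b ^ n))) :
    SmSeq (fun n => b ^ n - y * b ^ (n + 1)) := by
  have hE1 := hE1' h1
  have hib : (e * b) * (e * b) = e * b := by
    have h : (e * b) * (e * b) = (e * (b * e)) * b := by noncomm_ring
    rw [h, he]
  have hcom2 : Commute (e * b) b := by
    show (e * b) * b = b * (e * b)
    rw [← mul_assoc, hcomm]
  have hcom3 : Commute (1 - e * b) b := (Commute.one_left b).sub_left hcom2
  have hid : (1 - e * b) * (1 - e * b) = 1 - e * b := by
    have h : (1 - e * b) * (1 - e * b) = 1 - e * b - e * b + (e * b) * (e * b) := by noncomm_ring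
    rw [h, hib]; abel
  have hc1 : b - b * (b * e) = (1 - e * b) * b := by
    have h : b * (b * e) = (e * b) * b := by
      rw [hcomm, ← mul_assoc, hcomm]
    rw [h]; noncomm_ring
  have hcn : ∀ n : ℕ, (b - b * (b * e)) ^ (n + 1) = (1 - e * b) * b ^ (n + 1) := by
    intro n
    induction n with
    | zero => rw [pow_one, pow_one, hc1]
    | succ n ih =>
      calc (b - b * (b * e)) ^ (n + 2)
          = (b - b * (b * e)) ^ (n + 1) * (b - b * (b * e)) := pow_succ _ _
        _ = ((1 - e * b) * b ^ (n + 1)) * ((1 - e * b) * b) := by rw [ih, hc1]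
        _ = (1 - e * b) * ((b ^ (n + 1) * (1 - e * b)) * b) := by noncomm_ring
        _ = (1 - e * b) * (((1 - e * b) * b ^ (n + 1)) * b) := by
            rw [← (hcom3.pow_right (n + 1)).eq]
        _ = ((1 - e * b) * (1 - e * b)) * (b ^ (n + 1) * b) := by noncomm_ring
        _ = (1 - e * b) * b ^ (n + 2) := by rw [hid, pow_succ b (n + 1)]
  have key : ∀ n : ℕ, b ^ (n + 1) - y * b ^ (n + 2)
      = (b - b * (b * e)) ^ (n + 1) * (1 - y ^ (n + 2) * b ^ (n + 2))
        + e * (b ^ (n + 2) - b * (y * b ^ (n + 2))) := by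
    intro n
    rw [hcn n]
    have hBY : b ^ (n + 1) * y ^ (n + 2) = y := hE1 (n + 1)
    have hBb : b * b ^ (n + 1) = b ^ (n + 1) * b := by rw [← pow_succ, ← pow_succ']
    have hp2 : b ^ (n + 2) = b ^ (n + 1) * b := pow_succ b (n + 1)
    rw [hp2]
    calc b ^ (n + 1) - y * (b ^ (n + 1) * b)
        = b ^ (n + 1) - y * (b ^ (n + 1) * b) - e * (b ^ (n + 1) * b)
            + e * (b * (y * (b ^ (n + 1) * b)))
            + e * (b ^ (n + 1) * b) - e * (b * (y * (b ^ (n + 1) * b))) := by abel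
      _ = b ^ (n + 1) - (b ^ (n + 1) * y ^ (n + 2)) * (b ^ (n + 1) * b)
            - e * (b * b ^ (n + 1))
            + e * (b * ((b ^ (n + 1) * y ^ (n + 2)) * (b ^ (n + 1) * b)))
            + e * (b ^ (n + 1) * b) - e * (b * (y * (b ^ (n + 1) * b))) := by rw [hBY, hBb]
      _ = (1 - e * b) * b ^ (n + 1) * (1 - y ^ (n + 2) * (b ^ (n + 1) * b))
            + e * (b ^ (n + 1) * b - b * (y * (b ^ (n + 1) * b))) := by noncomm_ring
  have hsm1 : SmSeq (fun n => (b - b * (b * e)) ^ n * (1 - y ^ (n + 1) * b ^ (n + 1))) := by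
    refine hc.of_le ((‖(1 : A)‖ + 1) + (1 + ‖y‖) * (1 + ‖b‖)) ((1 + ‖y‖) * (1 + ‖b‖))
      (by positivity) (Eventually.of_forall fun n => ?_)
    set M : ℝ := (1 + ‖y‖) * (1 + ‖b‖) with hM
    have hM1 : (1 : ℝ) ≤ M := by nlinarith [norm_nonneg y, norm_nonneg b]
    have hMn : (1 : ℝ) ≤ M ^ n := one_le_pow₀ hM1
    have hz : ‖(1 : A) - y ^ (n + 1) * b ^ (n + 1)‖ ≤ (‖(1 : A)‖ + 1) * M ^ n + M * M ^ n := by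
      calc ‖(1 : A) - y ^ (n + 1) * b ^ (n + 1)‖
          ≤ ‖(1 : A)‖ + ‖y ^ (n + 1) * b ^ (n + 1)‖ := norm_sub_le _ _
        _ ≤ ‖(1 : A)‖ + ‖y‖ ^ (n + 1) * ‖b‖ ^ (n + 1) := by
            refine add_le_add le_rfl ?_
            calc ‖y ^ (n + 1) * b ^ (n + 1)‖ ≤ ‖y ^ (n + 1)‖ * ‖b ^ (n + 1)‖ := norm_mul_le _ _
              _ ≤ ‖y‖ ^ (n + 1) * ‖b‖ ^ (n + 1) :=
                  mul_le_mul (norm_pow_le' y (Nat.succ_pos n)) (norm_pow_le' b (Nat.succ_pos n))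
                    (norm_nonneg _) (by positivity)
        _ ≤ (‖(1 : A)‖ + 1) * M ^ n + M * M ^ n := by
            have h2 : ‖y‖ ^ (n + 1) * ‖b‖ ^ (n + 1) ≤ M ^ (n + 1) := by
              rw [← mul_pow]
              exact pow_le_pow_left₀ (by positivity) (by nlinarith [norm_nonneg y, norm_nonneg b]) _
            have h3 : (M : ℝ) ^ (n + 1) = M * M ^ n := pow_succ' M n
            nlinarith [norm_nonneg (1 : A)]
    calc ‖(b - b * (b * e)) ^ n * (1 - y ^ (n + 1) * b ^ (n + 1))‖
        ≤ ‖(b - b * (b * e)) ^ n‖ * ‖(1 : A) - y ^ (n + 1) * b ^ (n + 1)‖ := norm_mul_le _ _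
      _ ≤ ‖(b - b * (b * e)) ^ n‖ * (((‖(1 : A)‖ + 1) + M) * M ^ n) := by
          refine mul_le_mul_of_nonneg_left ?_ (norm_nonneg _)
          calc ‖(1 : A) - y ^ (n + 1) * b ^ (n + 1)‖ ≤ (‖(1 : A)‖ + 1) * M ^ n + M * M ^ n := hz
            _ = ((‖(1 : A)‖ + 1) + M) * M ^ n := by ring
      _ = ((‖(1 : A)‖ + 1) + M) * M ^ n * ‖(b - b * (b * e)) ^ n‖ := by ring
  have hsm2 : SmSeq (fun n => e * (b ^ (n + 1) - b * (y * b ^ (n + 1)))) :=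
    (hq.shift).const_mul e
  refine (hsm1.add hsm2).congr' ?_
  filter_upwards [eventually_ge_atTop 1] with n hn
  obtain ⟨m, rfl⟩ : ∃ m, n = m + 1 := ⟨n - 1, by omega⟩
  exact key m

end Analytic

section GDrazin
variable {A : Type*} [NormedRing A] [CompleteSpace A]

lemma exists_gdrazin (b y : A) (h1 : b * (y * y) = y)
    (hp : SmSeq (fun n => b ^ n - y * b ^ (n + 1))) :
    ∃ e : A, b * e = e * b ∧ e * (b * e) = e ∧ SmSeq (fun n => (b - b * (b * e)) ^ n) := by
  have hE1 := hE1' h1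
  have hq : SmSeq (fun j => qs b y j) := (hp.const_mul (1 - b * y)).congr (qs_eq h1)
  -- exact identity E3 : y (b y) = y
  have hE3 : y * (b * y) = y := by
    have key3 : ∀ j : ℕ, (b ^ j - y * b ^ (j + 1)) * y ^ (j + 1) = y - y * (b * y) := by
      intro j
      calc (b ^ j - y * b ^ (j + 1)) * y ^ (j + 1)
          = b ^ j * y ^ (j + 1) - y * ((b * b ^ j) * y ^ (j + 1)) := by
            rw [pow_succ' b j]; noncomm_ring
        _ = b ^ j * y ^ (j + 1) - y * (b * (b ^ j * y ^ (j + 1))) := by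
            rw [mul_assoc b (b ^ j) (y ^ (j + 1))]
        _ = y - y * (b * y) := by rw [hE1 j]
    have hz : y - y * (b * y) = 0 := by
      refine eq_zero_of_smSeq hp ‖y‖ ‖y‖ (norm_nonneg y) (norm_nonneg y) (fun j => ?_)
      rw [← key3 j]
      calc ‖(b ^ j - y * b ^ (j + 1)) * y ^ (j + 1)‖
          ≤ ‖b ^ j - y * b ^ (j + 1)‖ * ‖y ^ (j + 1)‖ := norm_mul_le _ _
        _ ≤ ‖b ^ j - y * b ^ (j + 1)‖ * (‖y‖ * ‖y‖ ^ j) := by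
            refine mul_le_mul_of_nonneg_left ?_ (norm_nonneg _)
            calc ‖y ^ (j + 1)‖ ≤ ‖y‖ ^ (j + 1) := norm_pow_le' y (Nat.succ_pos j)
              _ = ‖y‖ * ‖y‖ ^ j := pow_succ' _ _
    exact (sub_eq_zero.mp hz).symm
  -- exact identity E2 : b y = y (b (b y))
  have hE2 : b * y = y * (b * (b * y)) := by
    have key2 : ∀ j : ℕ, (b ^ (j + 1) - y * b ^ (j + 2)) * y ^ (j + 1)
        = b * y - y * (b * (b * y)) := by
      intro j
      calc (b ^ (j + 1) - y * b ^ (j + 2)) * y ^ (j + 1)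
          = (b * b ^ j) * y ^ (j + 1) - y * ((b * (b * b ^ j)) * y ^ (j + 1)) := by
            rw [pow_succ' b (j + 1), pow_succ' b j]; noncomm_ring
        _ = b * (b ^ j * y ^ (j + 1)) - y * (b * (b * (b ^ j * y ^ (j + 1)))) := by
            noncomm_ring
        _ = b * y - y * (b * (b * y)) := by rw [hE1 j]
    have hz : b * y - y * (b * (b * y)) = 0 := by
      refine eq_zero_of_smSeq hp.shift ‖y‖ ‖y‖ (norm_nonneg y) (norm_nonneg y) (fun j => ?_)
      rw [← key2 j]
      calc ‖(b ^ (j + 1) - y * b ^ (j + 2)) * y ^ (j + 1)‖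
          ≤ ‖b ^ (j + 1) - y * b ^ (j + 2)‖ * ‖y ^ (j + 1)‖ := norm_mul_le _ _
        _ ≤ ‖b ^ (j + 1) - y * b ^ (j + 2)‖ * (‖y‖ * ‖y‖ ^ j) := by
            refine mul_le_mul_of_nonneg_left ?_ (norm_nonneg _)
            calc ‖y ^ (j + 1)‖ ≤ ‖y‖ ^ (j + 1) := norm_pow_le' y (Nat.succ_pos j)
              _ = ‖y‖ * ‖y‖ ^ j := pow_succ' _ _
    exact sub_eq_zero.mp hz
  -- constants and summability
  set ε₁ : ℝ := 1 / (2 * (‖y‖ + 1)) with hε₁def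
  have hε₁ : 0 < ε₁ := by rw [hε₁def]; positivity
  have hyε : ‖y‖ * ε₁ ≤ 1 / 2 := by
    have := aux_div ‖y‖ 1 (norm_nonneg y) zero_le_one
    simpa [hε₁def] using this
  obtain ⟨C, hC1, hCq⟩ := hq.exists_bound hε₁
  have geom : Summable (fun j : ℕ => ((1 : ℝ) / 2) ^ j) :=
    summable_geometric_of_lt_one (by norm_num) (by norm_num)
  have htsum_geom : ∑' j : ℕ, ((1 : ℝ) / 2) ^ j = 2 := by
    rw [tsum_geometric_of_lt_one (by norm_num) (by norm_num)]; norm_num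
  have hterm : ∀ (ε' C' : ℝ), 0 < ε' → ε' ≤ ε₁ → 1 ≤ C' → (∀ j, ‖qs b y j‖ ≤ C' * ε' ^ j) →
      ∀ (m n j : ℕ), ‖y ^ (j + m + 1) * (b * qs b y (j + n))‖
        ≤ (C' * ‖b‖ * ‖y‖ ^ (m + 1) * ε' ^ n) * ((1 : ℝ) / 2) ^ j := by
    intro ε' C' hε' hle hC'1 hq' m n j
    have hC'0 : (0 : ℝ) ≤ C' := le_trans zero_le_one hC'1
    have hyε' : ‖y‖ * ε' ≤ 1 / 2 :=
      le_trans (mul_le_mul_of_nonneg_left hle (norm_nonneg y)) hyε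
    calc ‖y ^ (j + m + 1) * (b * qs b y (j + n))‖
        ≤ ‖y ^ (j + m + 1)‖ * ‖b * qs b y (j + n)‖ := norm_mul_le _ _
      _ ≤ ‖y‖ ^ (j + m + 1) * (‖b‖ * (C' * ε' ^ (j + n))) := by
          refine mul_le_mul (norm_pow_le' y (Nat.succ_pos _)) ?_ (norm_nonneg _) (by positivity)
          calc ‖b * qs b y (j + n)‖ ≤ ‖b‖ * ‖qs b y (j + n)‖ := norm_mul_le _ _
            _ ≤ ‖b‖ * (C' * ε' ^ (j + n)) :=
                mul_le_mul_of_nonneg_left (hq' _) (norm_nonneg b)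
      _ = (C' * ‖b‖ * ‖y‖ ^ (m + 1) * ε' ^ n) * (‖y‖ * ε') ^ j := by
          rw [mul_pow, pow_add, pow_add, pow_add]; ring
      _ ≤ (C' * ‖b‖ * ‖y‖ ^ (m + 1) * ε' ^ n) * ((1 : ℝ) / 2) ^ j := by
          refine mul_le_mul_of_nonneg_left (pow_le_pow_left₀ (by positivity) hyε' j) ?_
          have := pow_nonneg hε'.le n
          positivity
  have hsum1 : ∀ n, Summable (fun j : ℕ => y ^ (j + 1) * (b * qs b y (j + n))) := by
    intro n
    refine Summable.of_norm_bounded (geom.mul_left (C * ‖b‖ * ‖y‖ ^ 1 * ε₁ ^ n)) (fun j => ?_)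
    exact hterm ε₁ C hε₁ le_rfl hC1 hCq 0 n j
  have hsum2 : ∀ n, Summable (fun j : ℕ => y ^ (j + 2) * (b * qs b y (j + n))) := by
    intro n
    refine Summable.of_norm_bounded (geom.mul_left (C * ‖b‖ * ‖y‖ ^ 2 * ε₁ ^ n)) (fun j => ?_)
    exact hterm ε₁ C hε₁ le_rfl hC1 hCq 1 n j
  have hsum1' : Summable (fun j : ℕ => y ^ (j + 1) * (b * qs b y j)) := hsum1 0
  have hsum2' : Summable (fun j : ℕ => y ^ (j + 2) * (b * qs b y j)) := hsum2 0
  -- tsum computations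
  have eq_bS : b * (∑' j : ℕ, y ^ (j + 2) * (b * qs b y j))
      = ∑' j : ℕ, y ^ (j + 1) * (b * qs b y j) := by
    rw [← Summable.tsum_mul_left b hsum2']
    exact tsum_congr (fun j => F_by h1 j (b * qs b y j))
  have eq_Sb : (∑' j : ℕ, y ^ (j + 2) * (b * qs b y j)) * b
      = ∑' j : ℕ, y ^ (j + 2) * (b * qs b y (j + 1)) := by
    rw [← Summable.tsum_mul_right b hsum2']
    exact tsum_congr (fun j => by rw [mul_assoc, mul_assoc, F_qb j])
  have eq_T0 : (∑' j : ℕ, y ^ (j + 1) * (b * qs b y j))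
      = y * (b * qs b y 0) + ∑' j : ℕ, y ^ (j + 2) * (b * qs b y (j + 1)) := by
    have h := Summable.tsum_eq_zero_add hsum1'
    rw [h]
    congr 1
    rw [pow_one]
  have eq_c4 : y * (b * qs b y 0) = y * b - b * y := by
    have h : y * (b * qs b y 0) = y * b - y * (b * (b * y)) := by
      rw [qs_zero]; noncomm_ring
    rw [h, ← hE2]
  have hbe : b * (y + ∑' j : ℕ, y ^ (j + 2) * (b * qs b y j))
      = (y + ∑' j : ℕ, y ^ (j + 2) * (b * qs b y j)) * b := by
    calc b * (y + ∑' j : ℕ, y ^ (j + 2) * (b * qs b y j))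
        = b * y + ∑' j : ℕ, y ^ (j + 1) * (b * qs b y j) := by rw [mul_add, eq_bS]
      _ = b * y + ((y * b - b * y) + ∑' j : ℕ, y ^ (j + 2) * (b * qs b y (j + 1))) := by
          rw [eq_T0, eq_c4]
      _ = y * b + ∑' j : ℕ, y ^ (j + 2) * (b * qs b y (j + 1)) := by abel
      _ = (y + ∑' j : ℕ, y ^ (j + 2) * (b * qs b y j)) * b := by rw [add_mul, eq_Sb]
  have hqT : ∀ (m n : ℕ), qs b y m * (∑' j : ℕ, y ^ (j + 1) * (b * qs b y (j + n))) = 0 := by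
    intro m n
    calc qs b y m * (∑' j : ℕ, y ^ (j + 1) * (b * qs b y (j + n)))
        = ∑' j : ℕ, qs b y m * (y ^ (j + 1) * (b * qs b y (j + n))) :=
          (Summable.tsum_mul_left _ (hsum1 n)).symm
      _ = ∑' _ : ℕ, (0 : A) := tsum_congr (fun j => F_qyt h1 hE2 m j _)
      _ = 0 := tsum_zero
  have hqT0 : ∀ (m : ℕ), qs b y m * (∑' j : ℕ, y ^ (j + 1) * (b * qs b y j)) = 0 :=
    fun m => hqT m 0
  have eq_yT0 : y * (∑' j : ℕ, y ^ (j + 1) * (b * qs b y j))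
      = ∑' j : ℕ, y ^ (j + 2) * (b * qs b y j) := by
    rw [← Summable.tsum_mul_left y hsum1']
    exact tsum_congr (fun j => F_yf j _)
  have eq_Sby : (∑' j : ℕ, y ^ (j + 2) * (b * qs b y j)) * (b * y) = 0 := by
    calc (∑' j : ℕ, y ^ (j + 2) * (b * qs b y j)) * (b * y)
        = ∑' j : ℕ, (y ^ (j + 2) * (b * qs b y j)) * (b * y) :=
          (Summable.tsum_mul_right _ hsum2').symm
      _ = ∑' _ : ℕ, (0 : A) := tsum_congr (fun j => F_fby h1 hE2 j)
      _ = 0 := tsum_zero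
  have eq_ST0 : (∑' j : ℕ, y ^ (j + 2) * (b * qs b y j))
      * (∑' j : ℕ, y ^ (j + 1) * (b * qs b y j)) = 0 := by
    calc (∑' j : ℕ, y ^ (j + 2) * (b * qs b y j)) * (∑' j : ℕ, y ^ (j + 1) * (b * qs b y j))
        = ∑' j : ℕ, (y ^ (j + 2) * (b * qs b y j))
            * (∑' k : ℕ, y ^ (k + 1) * (b * qs b y k)) :=
          (Summable.tsum_mul_right _ hsum2').symm
      _ = ∑' _ : ℕ, (0 : A) := tsum_congr (fun j => by
            rw [mul_assoc, mul_assoc, hqT0 j, mul_zero, mul_zero])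
      _ = 0 := tsum_zero
  have he : (y + ∑' j : ℕ, y ^ (j + 2) * (b * qs b y j))
      * (b * (y + ∑' j : ℕ, y ^ (j + 2) * (b * qs b y j)))
      = y + ∑' j : ℕ, y ^ (j + 2) * (b * qs b y j) := by
    have hc1 : b * (y + ∑' j : ℕ, y ^ (j + 2) * (b * qs b y j))
        = b * y + ∑' j : ℕ, y ^ (j + 1) * (b * qs b y j) := by rw [mul_add, eq_bS]
    rw [hc1]
    have expand : (y + ∑' j : ℕ, y ^ (j + 2) * (b * qs b y j))
        * (b * y + ∑' j : ℕ, y ^ (j + 1) * (b * qs b y j))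
        = y * (b * y) + (∑' j : ℕ, y ^ (j + 2) * (b * qs b y j)) * (b * y)
          + (y * (∑' j : ℕ, y ^ (j + 1) * (b * qs b y j))
            + (∑' j : ℕ, y ^ (j + 2) * (b * qs b y j))
              * (∑' j : ℕ, y ^ (j + 1) * (b * qs b y j))) := by
      noncomm_ring
    rw [expand, hE3, eq_Sby, eq_yT0, eq_ST0]
    abel
  have eq_T0b : (∑' j : ℕ, y ^ (j + 1) * (b * qs b y j)) * b
      = ∑' j : ℕ, y ^ (j + 1) * (b * qs b y (j + 1)) := by
    rw [← Summable.tsum_mul_right b hsum1']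
    exact tsum_congr (fun j => by rw [mul_assoc, mul_assoc, F_qb j])
  have hcc : b - b * (b * (y + ∑' j : ℕ, y ^ (j + 2) * (b * qs b y j)))
      = qs b y 1 - ∑' j : ℕ, y ^ (j + 1) * (b * qs b y (j + 1)) := by
    have h2 : b * (b * (y + ∑' j : ℕ, y ^ (j + 2) * (b * qs b y j)))
        = (b * y) * b + ∑' j : ℕ, y ^ (j + 1) * (b * qs b y (j + 1)) := by
      calc b * (b * (y + ∑' j : ℕ, y ^ (j + 2) * (b * qs b y j)))
          = b * ((y + ∑' j : ℕ, y ^ (j + 2) * (b * qs b y j)) * b) := by rw [hbe]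
        _ = (b * (y + ∑' j : ℕ, y ^ (j + 2) * (b * qs b y j))) * b := by rw [← mul_assoc]
        _ = (b * y + ∑' j : ℕ, y ^ (j + 1) * (b * qs b y j)) * b := by rw [mul_add, eq_bS]
        _ = (b * y) * b + (∑' j : ℕ, y ^ (j + 1) * (b * qs b y j)) * b := add_mul _ _ _
        _ = (b * y) * b + ∑' j : ℕ, y ^ (j + 1) * (b * qs b y (j + 1)) := by rw [eq_T0b]
    have hq1 : qs b y 1 = b - (b * y) * b := by
      unfold qs; rw [pow_one, mul_assoc]
    rw [h2, hq1]
    abel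
  have hcnn : ∀ n : ℕ, (b - b * (b * (y + ∑' j : ℕ, y ^ (j + 2) * (b * qs b y j)))) ^ (n + 1)
      = qs b y (n + 1) - ∑' j : ℕ, y ^ (j + 1) * (b * qs b y (j + (n + 1))) := by
    intro n
    induction n with
    | zero => rw [pow_one]; exact hcc
    | succ n ih =>
      have eq_Tq : (∑' j : ℕ, y ^ (j + 1) * (b * qs b y (j + (n + 1)))) * qs b y 1
          = ∑' j : ℕ, y ^ (j + 1) * (b * qs b y (j + (n + 2))) := by
        rw [← Summable.tsum_mul_right _ (hsum1 (n + 1))]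
        exact tsum_congr (fun j => by
          rw [mul_assoc, mul_assoc,
            show qs b y (j + (n + 1)) * qs b y 1 = qs b y (j + (n + 2)) from
              F_qq h1 hE2 (j + (n + 1)) 1])
      have eq_TT : (∑' j : ℕ, y ^ (j + 1) * (b * qs b y (j + (n + 1))))
          * (∑' j : ℕ, y ^ (j + 1) * (b * qs b y (j + 1))) = 0 := by
        calc (∑' j : ℕ, y ^ (j + 1) * (b * qs b y (j + (n + 1))))
            * (∑' j : ℕ, y ^ (j + 1) * (b * qs b y (j + 1)))
            = ∑' j : ℕ, (y ^ (j + 1) * (b * qs b y (j + (n + 1))))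
              * (∑' k : ℕ, y ^ (k + 1) * (b * qs b y (k + 1))) :=
            (Summable.tsum_mul_right _ (hsum1 (n + 1))).symm
          _ = ∑' _ : ℕ, (0 : A) := tsum_congr (fun j => by
              rw [mul_assoc, mul_assoc, hqT (j + (n + 1)) 1, mul_zero, mul_zero])
          _ = 0 := tsum_zero
      calc (b - b * (b * (y + ∑' j : ℕ, y ^ (j + 2) * (b * qs b y j)))) ^ (n + 2)
          = (b - b * (b * (y + ∑' j : ℕ, y ^ (j + 2) * (b * qs b y j)))) ^ (n + 1)
            * (b - b * (b * (y + ∑' j : ℕ, y ^ (j + 2) * (b * qs b y j)))) := pow_succ _ _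
        _ = (qs b y (n + 1) - ∑' j : ℕ, y ^ (j + 1) * (b * qs b y (j + (n + 1))))
            * (qs b y 1 - ∑' j : ℕ, y ^ (j + 1) * (b * qs b y (j + 1))) := by rw [ih, hcc]
        _ = qs b y (n + 1) * qs b y 1
            - qs b y (n + 1) * (∑' j : ℕ, y ^ (j + 1) * (b * qs b y (j + 1)))
            - (∑' j : ℕ, y ^ (j + 1) * (b * qs b y (j + (n + 1)))) * qs b y 1
            + (∑' j : ℕ, y ^ (j + 1) * (b * qs b y (j + (n + 1))))
              * (∑' j : ℕ, y ^ (j + 1) * (b * qs b y (j + 1))) := by noncomm_ring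
        _ = qs b y (n + 2)
            - 0
            - ∑' j : ℕ, y ^ (j + 1) * (b * qs b y (j + (n + 2)))
            + 0 := by
            rw [show qs b y (n + 1) * qs b y 1 = qs b y (n + 2) from F_qq h1 hE2 (n + 1) 1,
              hqT (n + 1) 1, eq_Tq, eq_TT]
        _ = qs b y (n + 2) - ∑' j : ℕ, y ^ (j + 1) * (b * qs b y (j + (n + 2))) := by abel
  -- quasinilpotency
  have hTsm : SmSeq (fun n => ∑' j : ℕ, y ^ (j + 1) * (b * qs b y (j + n))) := by
    refine smSeq_of_bound (fun ε hε => ?_)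
    have hε' : 0 < min ε ε₁ := lt_min hε hε₁
    obtain ⟨C', hC'1, hC'q⟩ := hq.exists_bound hε'
    have hC'0 : (0 : ℝ) ≤ C' := le_trans zero_le_one hC'1
    refine ⟨C' * ‖b‖ * ‖y‖ * 2, fun n => ?_⟩
    have hbd : ∀ j : ℕ, ‖y ^ (j + 1) * (b * qs b y (j + n))‖
        ≤ (C' * ‖b‖ * ‖y‖ ^ 1 * (min ε ε₁) ^ n) * ((1 : ℝ) / 2) ^ j :=
      fun j => hterm _ C' hε' (min_le_right _ _) hC'1 hC'q 0 n j
    have hsn : Summable (fun j : ℕ => ‖y ^ (j + 1) * (b * qs b y (j + n))‖) :=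
      Summable.of_nonneg_of_le (fun j => norm_nonneg _) hbd
        (geom.mul_left (C' * ‖b‖ * ‖y‖ ^ 1 * (min ε ε₁) ^ n))
    have h5 : (min ε ε₁) ^ n ≤ ε ^ n := pow_le_pow_left₀ hε'.le (min_le_left _ _) n
    calc ‖∑' j : ℕ, y ^ (j + 1) * (b * qs b y (j + n))‖
        ≤ ∑' j : ℕ, ‖y ^ (j + 1) * (b * qs b y (j + n))‖ := norm_tsum_le_tsum_norm hsn
      _ ≤ ∑' j : ℕ, (C' * ‖b‖ * ‖y‖ ^ 1 * (min ε ε₁) ^ n) * ((1 : ℝ) / 2) ^ j :=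
          Summable.tsum_le_tsum hbd hsn (geom.mul_left _)
      _ = (C' * ‖b‖ * ‖y‖ ^ 1 * (min ε ε₁) ^ n) * 2 := by rw [tsum_mul_left, htsum_geom]
      _ = (C' * ‖b‖ * ‖y‖ * 2) * (min ε ε₁) ^ n := by rw [pow_one]; ring
      _ ≤ (C' * ‖b‖ * ‖y‖ * 2) * ε ^ n := by
          refine mul_le_mul_of_nonneg_left h5 ?_
          have := norm_nonneg b; have := norm_nonneg y
          positivity
  refine ⟨y + ∑' j : ℕ, y ^ (j + 2) * (b * qs b y j), hbe, he, ?_⟩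
  refine (hq.sub hTsm).congr' ?_
  filter_upwards [eventually_ge_atTop 1] with n hn
  obtain ⟨m, rfl⟩ : ∃ m, n = m + 1 := ⟨n - 1, by omega⟩
  exact hcnn m

end GDrazin


variable {A : Type*} [NormedRing A] [NormedAlgebra ℂ A] [StarRing A] [StarModule ℂ A]
  [CompleteSpace A]

/-- Lemma 4.1. -/
theorem isWCoreEPInv_exists_iff_aux (w a : A) :
    ((∃ x, IsWCoreEPInv w a x) ↔
      (∃ g, IsWGDrazinInv w a g) ∧
      ∃ x : A, a * (w * x) ^ 2 = x ∧ star (w * a * w * x) = w * a * w * x ∧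
        Filter.Tendsto
          (fun n : ℕ => ‖(a * w) ^ n - a * w * (x * w) * (a * w) ^ n‖ ^ (1 / (n : ℝ)))
          Filter.atTop (nhds 0)) ∧
    (∀ x : A, (∃ g, IsWGDrazinInv w a g) →
      (a * (w * x) ^ 2 = x ∧ star (w * a * w * x) = w * a * w * x ∧
        Filter.Tendsto
          (fun n : ℕ => ‖(a * w) ^ n - a * w * (x * w) * (a * w) ^ n‖ ^ (1 / (n : ℝ)))
          Filter.atTop (nhds 0)) →
      IsWCoreEPInv w a x) := by
  -- the reverse implication, used twice
  have hQ : ∀ x : A, (∃ g, IsWGDrazinInv w a g) →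
      (a * (w * x) ^ 2 = x ∧ star (w * a * w * x) = w * a * w * x ∧
        Filter.Tendsto
          (fun n : ℕ => ‖(a * w) ^ n - a * w * (x * w) * (a * w) ^ n‖ ^ (1 / (n : ℝ)))
          Filter.atTop (nhds 0)) →
      IsWCoreEPInv w a x := by
    rintro x ⟨g, hg1, hg2, hg3⟩ ⟨hx1, hx2, hx3⟩
    refine ⟨hx1, hx2, ?_⟩
    have h1 : (a * w) * ((x * w) * (x * w)) = x * w := by
      have h := congrArg (· * w) hx1
      simpa [pow_two, mul_assoc] using h
    have hcomm : (a * w) * (g * w) = (g * w) * (a * w) := by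
      calc (a * w) * (g * w) = (a * w * g) * w := by rw [← mul_assoc]
        _ = (g * w * a) * w := by rw [hg1]
        _ = (g * w) * (a * w) := by rw [mul_assoc]
    have he : (g * w) * ((a * w) * (g * w)) = g * w := by
      calc (g * w) * ((a * w) * (g * w)) = (g * w * a * w * g) * w := by noncomm_ring
        _ = g * w := by rw [hg2]
    have hcq : SmSeq (fun n => ((a * w) - (a * w) * ((a * w) * (g * w))) ^ n) := by
      have h0 : SmSeq (fun n => ((a - a * w * g * w * a) * w) ^ n) := smSeq_of_tendsto hg3
      refine h0.congr (fun n => ?_)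
      congr 1
      have hx : (a * w) * ((a * w) * (g * w)) = (a * w * g * w * a) * w := by
        calc (a * w) * ((a * w) * (g * w)) = (a * w) * (((a * w) * g) * w) := by
              rw [mul_assoc (a * w) g w]
          _ = (a * w) * (((g * w) * a) * w) := by rw [show (a * w) * g = (g * w) * a from hg1]
          _ = (a * w * g * w * a) * w := by noncomm_ring
      rw [hx]
      noncomm_ring
    have hq : SmSeq (fun n => (a * w) ^ n - (a * w) * ((x * w) * (a * w) ^ n)) := by
      refine (smSeq_of_tendsto hx3).congr (fun n => ?_)
      rw [← mul_assoc]
    have hp := pSm_of_qSm (a * w) (x * w) (g * w) hcomm he hcq h1 hq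
    exact hp.tendsto
  refine ⟨⟨?_, fun h => ?_⟩, hQ⟩
  · rintro ⟨x, hx1, hx2, hx3⟩
    have h1 : (a * w) * ((x * w) * (x * w)) = x * w := by
      have h := congrArg (· * w) hx1
      simpa [pow_two, mul_assoc] using h
    have hp : SmSeq (fun n => (a * w) ^ n - x * w * (a * w) ^ (n + 1)) := smSeq_of_tendsto hx3
    obtain ⟨e, hcomm, he, hc⟩ := exists_gdrazin (a * w) (x * w) h1 hp
    have hgw : (e * e * a) * w = e := by
      calc (e * e * a) * w = e * (e * (a * w)) := by noncomm_ring
        _ = e * ((a * w) * e) := by rw [← hcomm]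
        _ = e := he
    have hawg : a * w * (e * e * a) = e * a := by
      calc a * w * (e * e * a) = (((a * w) * e) * e) * a := by noncomm_ring
        _ = ((e * (a * w)) * e) * a := by rw [hcomm]
        _ = (e * ((a * w) * e)) * a := by rw [mul_assoc e (a * w) e]
        _ = e * a := by rw [he]
    constructor
    · refine ⟨e * e * a, ?_, ?_, ?_⟩
      · -- a * w * (e*e*a) = (e*e*a) * w * a
        rw [hawg]
        calc e * a = ((e * e * a) * w) * a := by rw [hgw]
          _ = e * e * a * w * a := by noncomm_ring
      · -- (e*e*a) * w * a * w * (e*e*a) = e*e*a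
        calc e * e * a * w * a * w * (e * e * a)
            = (((e * e * a) * w) * a) * (w * (e * e * a)) := by noncomm_ring
          _ = (e * a) * (w * (e * e * a)) := by rw [hgw]
          _ = e * (a * w * (e * e * a)) := by noncomm_ring
          _ = e * (e * a) := by rw [hawg]
          _ = e * e * a := by rw [← mul_assoc]
      · -- w-quasinilpotency
        show Filter.Tendsto
          (fun n : ℕ => ‖((a - a * w * (e * e * a) * w * a) * w) ^ n‖ ^ (1 / (n : ℝ)))
          Filter.atTop (nhds 0)
        have hbase : (a - a * w * (e * e * a) * w * a) * w = (a * w) - (a * w) * ((a * w) * e) := by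
          have h3 : a * w * (e * e * a) * w * a = (e * (a * w)) * a := by
            rw [hawg]; noncomm_ring
          rw [h3]
          have h4 : (a * w) * ((a * w) * e) = (e * (a * w)) * (a * w) := by
            rw [hcomm, ← mul_assoc, hcomm]
          rw [h4]
          noncomm_ring
        refine (SmSeq.tendsto ?_)
        refine hc.congr (fun n => ?_)
        rw [hbase]
    · refine ⟨x, hx1, hx2, ?_⟩
      have hq0 : SmSeq (fun j => qs (a * w) (x * w) j) :=
        (hp.const_mul (1 - (a * w) * (x * w))).congr (qs_eq h1)
      have : SmSeq (fun n => (a * w) ^ n - a * w * (x * w) * (a * w) ^ n) := by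
        refine hq0.congr (fun n => ?_)
        unfold qs
        rw [mul_assoc]
      exact this.tendsto
  · obtain ⟨hg, x, hx⟩ := h
    exact ⟨x, hQ x hg hx⟩
end

section
/- Let a ∈ 𝒜. Then a has a generalized w-weighted core-EP inverse if and only if a has a w-weighted g-Drazin inverse a^{d,w} and a^{d,w} has a w-weighted core inverse. In this case a^{⊛d,w} = (a^{d,w}·w)²·(a^{d,w})^{⊛,w}, and moreover (a^{d,w})^{⊛,w} = (aw)²·a^{⊛d,w}. -/
open Filter

variable {A : Type*} [NormedRing A] [NormedAlgebra ℂ A] [StarRing A] [StarModule ℂ A]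
  [CompleteSpace A]

private lemma tendsto_rpow_one_div_nat {b : ℝ} (hb : 0 < b) :
    Tendsto (fun n : ℕ => b ^ (1 / (n : ℝ))) atTop (nhds 1) := by
  have h2 : Tendsto (fun t : ℝ => b ^ t) (nhds 0) (nhds 1) := by
    have h := (Real.continuousAt_const_rpow (a := b) (b := 0) hb.ne').tendsto
    simpa [Real.rpow_zero] using h
  exact h2.comp tendsto_one_div_atTop_nhds_zero_nat

private lemma rpow_one_div_le {t δ : ℝ} {n : ℕ} (ht : 0 ≤ t) (hn : 1 ≤ n)
    (h : t ^ (1 / (n : ℝ)) ≤ δ) : t ≤ δ ^ n := by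
  have hn0 : (0:ℝ) < n := by exact_mod_cast hn
  have h1 : t = (t ^ (1 / (n : ℝ))) ^ n := by
    rw [← Real.rpow_natCast (t ^ (1 / (n : ℝ))) n, ← Real.rpow_mul ht,
      one_div_mul_cancel hn0.ne', Real.rpow_one]
  rw [h1]
  exact pow_le_pow_left₀ (Real.rpow_nonneg ht _) h n

private lemma eventually_norm_le_pow {A : Type*} [NormedRing A] {r : ℕ → A}
    (hr : Tendsto (fun n : ℕ => ‖r n‖ ^ (1 / (n : ℝ))) atTop (nhds 0))
    {δ : ℝ} (hδ : 0 < δ) : ∀ᶠ n : ℕ in atTop, ‖r n‖ ≤ δ ^ n := by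
  filter_upwards [hr.eventually_lt_const hδ, eventually_ge_atTop 1] with n h hn
  exact rpow_one_div_le (norm_nonneg _) hn h.le

private lemma eq_zero_of_norm_le {A : Type*} [NormedRing A] {r : ℕ → A}
    (hr : Tendsto (fun n : ℕ => ‖r n‖ ^ (1 / (n : ℝ))) atTop (nhds 0))
    {v : A} {C K : ℝ}
    (hb : ∀ n : ℕ, 1 ≤ n → ‖v‖ ≤ C * K ^ n * ‖r n‖) : v = 0 := by
  by_contra hv
  have hv' : 0 < ‖v‖ := norm_pos_iff.mpr hv
  set C' : ℝ := |C| + 1 with hC'def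
  set K' : ℝ := |K| + 1 with hK'def
  have hC' : 0 < C' := by positivity
  have hK' : 0 < K' := by positivity
  have hb' : ∀ n : ℕ, 1 ≤ n → ‖v‖ ≤ C' * K' ^ n * ‖r n‖ := by
    intro n hn
    refine (hb n hn).trans (mul_le_mul_of_nonneg_right ?_ (norm_nonneg _))
    calc C * K ^ n ≤ |C * K ^ n| := le_abs_self _
    _ = |C| * |K| ^ n := by rw [abs_mul, abs_pow]
    _ ≤ C' * K' ^ n := by
        refine mul_le_mul (by rw [hC'def]; linarith) ?_ (pow_nonneg (abs_nonneg K) n) hC'.le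
        exact pow_le_pow_left₀ (abs_nonneg K) (by rw [hK'def]; linarith) n
  have hL : Tendsto (fun n : ℕ => ‖v‖ ^ (1 / (n : ℝ))) atTop (nhds 1) :=
    tendsto_rpow_one_div_nat hv'
  have hR0 : Tendsto (fun n : ℕ => K' * ‖r n‖ ^ (1 / (n : ℝ))) atTop (nhds (K' * 0)) :=
    hr.const_mul K'
  have hR : Tendsto (fun n : ℕ => C' ^ (1 / (n : ℝ)) * (K' * ‖r n‖ ^ (1 / (n : ℝ))))
      atTop (nhds 0) := by
    have := (tendsto_rpow_one_div_nat hC').mul hR0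
    simpa using this
  have hle : ∀ᶠ n : ℕ in atTop,
      ‖v‖ ^ (1 / (n : ℝ)) ≤ C' ^ (1 / (n : ℝ)) * (K' * ‖r n‖ ^ (1 / (n : ℝ))) := by
    filter_upwards [eventually_ge_atTop 1] with n hn
    have hn0 : (0:ℝ) < n := by exact_mod_cast hn
    have h1n : (0:ℝ) ≤ 1 / (n : ℝ) := by positivity
    have h2 := Real.rpow_le_rpow (norm_nonneg v) (hb' n hn) h1n
    refine h2.trans_eq ?_
    rw [Real.mul_rpow (by positivity) (norm_nonneg _),
      Real.mul_rpow hC'.le (by positivity)]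
    have h3 : ((K' : ℝ) ^ n) ^ (1 / (n : ℝ)) = K' := by
      rw [← Real.rpow_natCast K' n, ← Real.rpow_mul hK'.le,
        mul_one_div_cancel hn0.ne', Real.rpow_one]
    rw [h3, mul_assoc]
  have : (1:ℝ) ≤ 0 := le_of_tendsto_of_tendsto hL hR hle
  linarith

private lemma tendsto_rpow_of_norm_le {A : Type*} [NormedRing A] {r s : ℕ → A}
    (hr : Tendsto (fun n : ℕ => ‖r n‖ ^ (1 / (n : ℝ))) atTop (nhds 0)) {C : ℝ}
    (hb : ∀ᶠ n : ℕ in atTop, ‖s n‖ ≤ C * ‖r n‖) :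
    Tendsto (fun n : ℕ => ‖s n‖ ^ (1 / (n : ℝ))) atTop (nhds 0) := by
  set C' : ℝ := |C| + 1 with hC'def
  have hC' : 0 < C' := by positivity
  have hR : Tendsto (fun n : ℕ => C' ^ (1 / (n : ℝ)) * ‖r n‖ ^ (1 / (n : ℝ)))
      atTop (nhds 0) := by
    have := (tendsto_rpow_one_div_nat hC').mul hr
    simpa using this
  refine tendsto_of_tendsto_of_tendsto_of_le_of_le' tendsto_const_nhds hR ?_ ?_
  · filter_upwards with n; exact Real.rpow_nonneg (norm_nonneg _) _
  · filter_upwards [hb] with n hn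
    have h1n : (0:ℝ) ≤ 1 / (n : ℝ) := by positivity
    have h0 : ‖s n‖ ≤ C' * ‖r n‖ := by
      refine hn.trans (mul_le_mul_of_nonneg_right ?_ (norm_nonneg _))
      calc C ≤ |C| := le_abs_self _
      _ ≤ C' := by simp [hC'def]
    have h2 := Real.rpow_le_rpow (norm_nonneg _) h0 h1n
    refine h2.trans_eq ?_
    rw [Real.mul_rpow hC'.le (norm_nonneg _)]

private lemma summable_pow_mul_norm {A : Type*} [NormedRing A] {r : ℕ → A}
    (hr : Tendsto (fun n : ℕ => ‖r n‖ ^ (1 / (n : ℝ))) atTop (nhds 0))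
    {K : ℝ} (hK : 0 ≤ K) : Summable (fun n : ℕ => K ^ n * ‖r n‖) := by
  set δ : ℝ := 1 / (2 * (K + 1)) with hδdef
  have hδ : (0:ℝ) < δ := by positivity
  have hKδ : K * δ ≤ 1 / 2 := by
    rw [hδdef]
    rw [mul_one_div, div_le_div_iff₀ (by positivity) (by norm_num)]
    linarith
  obtain ⟨N, hN⟩ := eventually_atTop.mp (eventually_norm_le_pow hr hδ)
  rw [← summable_nat_add_iff N]
  refine Summable.of_nonneg_of_le (fun n => by positivity) (fun n => ?_)
    (summable_geometric_of_lt_one (r := 1/2) (by norm_num) (by norm_num))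
  calc K ^ (n + N) * ‖r (n + N)‖ ≤ K ^ (n + N) * δ ^ (n + N) := by
        exact mul_le_mul_of_nonneg_left (hN _ (Nat.le_add_left N n)) (pow_nonneg hK _)
  _ = (K * δ) ^ (n + N) := by rw [mul_pow]
  _ ≤ (1/2 : ℝ) ^ (n + N) := pow_le_pow_left₀ (by positivity) hKδ _
  _ ≤ (1/2 : ℝ) ^ n := by
      apply pow_le_pow_of_le_one (by norm_num) (by norm_num) (Nat.le_add_right n N)

/-- power decomposition `B^(k+1) = B^(k+2)E + Q^(k+1)`. -/
private lemma L_pow {A : Type*} [Ring A] {B E Q : A}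
    (hBE : B * E = E * B) (hEBE : E * (B * E) = E) (hQdef : Q = B - B * (E * B)) :
    ∀ k : ℕ, B ^ (k+1) = B ^ (k+1+1) * E + Q ^ (k+1) := by
  have hQE : Q * E = 0 := by
    rw [hQdef, sub_mul, mul_assoc B (E*B) E, mul_assoc E B E, hEBE, sub_self]
  have hcQB : Commute Q B := by
    show Q * B = B * Q
    have h1 : (E * B) * B = B * (E * B) := by rw [← hBE, mul_assoc, ← hBE]
    rw [hQdef, sub_mul, mul_sub, mul_assoc, h1]
  have hQmE : ∀ k : ℕ, Q ^ (k+1) * E = 0 := by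
    intro k; rw [pow_succ, mul_assoc, hQE, mul_zero]
  have hBsplit : B = Q + B * (E * B) := by rw [hQdef, sub_add_cancel]
  have hQkB : ∀ k : ℕ, Q ^ (k+1) * B = Q ^ (k+1+1) := by
    intro k
    have h2 : Q ^ (k+1) * (B * (E * B)) = 0 := by
      rw [← mul_assoc, (hcQB.pow_left (k+1)).eq, mul_assoc,
        ← mul_assoc (Q ^ (k+1)) E B, hQmE, zero_mul, mul_zero]
    conv_lhs => rw [hBsplit]
    rw [mul_add, h2, add_zero, ← pow_succ]
  intro k
  induction k with
  | zero =>
    show B ^ 1 = B ^ 2 * E + Q ^ 1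
    rw [pow_one, pow_one, pow_two, hQdef, mul_assoc, hBE]
    abel
  | succ k ih =>
    rw [pow_succ B (k+1), ih, add_mul, hQkB k, mul_assoc, ← hBE, ← mul_assoc, ← pow_succ]

/-- `(B^(k+1) - y B^(k+2)) E^(k+2) = E - y(BE)`. -/
private lemma L_rE {A : Type*} [Ring A] {B E : A} (y : A)
    (hBE : B * E = E * B) (hEBE : E * (B * E) = E) :
    ∀ k : ℕ, (B ^ (k+1) - y * B ^ (k+1+1)) * E ^ (k+1+1) = E - y * (B * E) := by
  have hc : Commute B E := hBE
  have hBEidem : B * E * (B * E) = B * E := by rw [mul_assoc, hEBE]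
  have hBEpow : ∀ k : ℕ, (B * E) ^ (k+1) = B * E := by
    intro k
    induction k with
    | zero => rw [pow_one]
    | succ k ih => rw [pow_succ, ih, hBEidem]
  have hBnEn : ∀ k : ℕ, B ^ (k+1) * E ^ (k+1) = B * E := by
    intro k; rw [← hc.mul_pow, hBEpow]
  have hBEE : B * (E * E) = E := by rw [← mul_assoc, hBE, mul_assoc, hEBE]
  intro k
  rw [sub_mul, pow_succ E (k+1), ← mul_assoc (B^(k+1)) (E^(k+1)) E, hBnEn k,
    mul_assoc B E E, hBEE, mul_assoc y (B^(k+1+1)) (E^(k+1) * E),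
    ← pow_succ E (k+1), hBnEn (k+1)]

private lemma auxB {A : Type*} [NormedRing A] [StarRing A] {w a d x : A}
    (hd : IsWGDrazinInv w a d) (hx : IsWCoreEPInv w a x) :
    IsWCoreInv w d ((a * w) ^ 2 * x) := by
  obtain ⟨hd1, hd2, hd3⟩ := hd
  obtain ⟨hx1, hx2, hr⟩ := hx
  have d1c : ∀ t : A, a * (w * (d * t)) = d * (w * (a * t)) := by
    intro t; have := congrArg (· * t) hd1; simp only [mul_assoc] at this; exact this
  have d2c : ∀ t : A, d * (w * (a * (w * (d * t)))) = d * t := by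
    intro t; have := congrArg (· * t) hd2; simp only [mul_assoc] at this; exact this
  have hBEE : a * (w * (d * (w * (d * w)))) = d * w := by rw [d1c, d2c]
  have hBEEc : ∀ t : A, a * (w * (d * (w * (d * (w * t))))) = d * (w * t) := by
    intro t; rw [d1c, d2c]
  have hx1c : ∀ t : A, a * (w * (x * (w * (x * t)))) = x * t := by
    intro t
    have h0 : a * (w * (x * (w * x))) = x := by simpa only [pow_two, mul_assoc] using hx1
    have := congrArg (· * t) h0; simp only [mul_assoc] at this; exact this
  have hBE : (a * w) * (d * w) = (d * w) * (a * w) := by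
    have := congrArg (· * w) hd1; simp only [mul_assoc] at this
    simp only [mul_assoc]; exact this
  have hc : Commute (a * w) (d * w) := hBE
  have hEBE : (d * w) * ((a * w) * (d * w)) = d * w := by
    have := congrArg (· * w) hd2; simp only [mul_assoc] at this
    simp only [mul_assoc]; exact this
  have hQdef : (a - a * w * d * w * a) * w = (a * w) - (a * w) * ((d * w) * (a * w)) := by
    noncomm_ring
  have hQten : Tendsto (fun n : ℕ => ‖((a - a * w * d * w * a) * w) ^ n‖ ^ (1 / (n : ℝ)))
      atTop (nhds 0) := hd3
  -- L1 : x w (aw)(dw) = dw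
  have hyL1 : (x * w) * ((a * w) * (d * w)) = d * w := by
    have hv := L_rE (B := a * w) (E := d * w) (x * w) hBE hEBE
    have hvz : d * w - (x * w) * ((a * w) * (d * w)) = 0 := by
      apply eq_zero_of_norm_le hr (C := ‖d * w‖) (K := ‖d * w‖)
      intro n hn
      obtain ⟨k, rfl⟩ : ∃ k, n = k + 1 := ⟨n - 1, by omega⟩
      rw [← hv k]
      calc ‖((a*w)^(k+1) - x*w*(a*w)^(k+1+1)) * (d*w)^(k+1+1)‖
          ≤ ‖(a*w)^(k+1) - x*w*(a*w)^(k+1+1)‖ * ‖(d*w)^(k+1+1)‖ := norm_mul_le _ _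
        _ ≤ ‖(a*w)^(k+1) - x*w*(a*w)^(k+1+1)‖ * ‖d*w‖^(k+1+1) :=
            mul_le_mul_of_nonneg_left (norm_pow_le' _ (by omega)) (norm_nonneg _)
        _ = ‖d*w‖ * ‖d*w‖^(k+1) * ‖(a*w)^(k+1) - x*w*(a*w)^(k+1+1)‖ := by ring
    have := sub_eq_zero.mp hvz
    exact this.symm
  have hyc : ∀ t : A, x * (w * (a * (w * (d * (w * t))))) = d * (w * t) := by
    intro t
    have h0 : x * (w * (a * (w * (d * w)))) = d * w := by
      simpa only [mul_assoc] using hyL1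
    have := congrArg (· * t) h0; simp only [mul_assoc] at this; exact this
  -- hxn
  have hBxc : ∀ t : A, (a * w) * (x * ((w * x) * t)) = x * t := by
    intro t; simp only [mul_assoc]; exact hx1c t
  have hxn : ∀ n : ℕ, (a * w) ^ n * (x * (w * x) ^ n) = x := by
    intro n
    induction n with
    | zero => simp
    | succ n ih =>
      rw [pow_succ (a*w) n, pow_succ' (w*x) n, mul_assoc, hBxc ((w*x)^n)]
      exact ih
  -- L4 : x = (aw)(dw)x
  have hfix : (a * w) * ((d * w) * x) = x := by
    have e2 := L_pow hBE hEBE hQdef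
    have hfixv : ∀ k : ℕ, x - (a*w) * ((d*w) * x)
        = ((a - a*w*d*w*a) * w) ^ (k+1) * (x * (w*x) ^ (k+1)) := by
      intro k
      have hsw : (a*w)^(k+1+1)*(d*w) = ((a*w)*(d*w))*((a*w)^(k+1)) := by
        rw [pow_succ' (a*w) (k+1), mul_assoc (a*w) ((a*w)^(k+1)) (d*w),
          mul_assoc (a*w) (d*w) ((a*w)^(k+1)), (hc.symm.pow_right (k+1)).eq]
      have h : (a*w)^(k+1) - (a*w)*((d*w)*(a*w)^(k+1)) = ((a - a*w*d*w*a)*w)^(k+1) := by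
        rw [← mul_assoc (a*w) (d*w) ((a*w)^(k+1)), ← hsw]
        conv_lhs => rw [e2 k]
        abel
      calc x - (a*w)*((d*w)*x)
          = ((a*w)^(k+1) - (a*w)*((d*w)*(a*w)^(k+1))) * (x*(w*x)^(k+1)) := by
            rw [sub_mul, hxn (k+1), mul_assoc (a*w) ((d*w)*((a*w)^(k+1))) (x*(w*x)^(k+1)),
              mul_assoc (d*w) ((a*w)^(k+1)) (x*(w*x)^(k+1)), hxn (k+1)]
        _ = ((a - a*w*d*w*a)*w)^(k+1) * (x*(w*x)^(k+1)) := by rw [h]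
    have hvz : x - (a*w) * ((d*w) * x) = 0 := by
      apply eq_zero_of_norm_le hQten (C := ‖x‖) (K := ‖w * x‖)
      intro n hn
      obtain ⟨k, rfl⟩ : ∃ k, n = k + 1 := ⟨n - 1, by omega⟩
      rw [hfixv k]
      calc ‖((a - a*w*d*w*a)*w)^(k+1) * (x*(w*x)^(k+1))‖
          ≤ ‖((a - a*w*d*w*a)*w)^(k+1)‖ * ‖x*(w*x)^(k+1)‖ := norm_mul_le _ _
        _ ≤ ‖((a - a*w*d*w*a)*w)^(k+1)‖ * (‖x‖ * ‖(w*x)^(k+1)‖) := by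
            exact mul_le_mul_of_nonneg_left (norm_mul_le _ _) (norm_nonneg _)
        _ ≤ ‖((a - a*w*d*w*a)*w)^(k+1)‖ * (‖x‖ * ‖w*x‖^(k+1)) := by
            exact mul_le_mul_of_nonneg_left
              (mul_le_mul_of_nonneg_left (norm_pow_le' _ (by omega)) (norm_nonneg x))
              (norm_nonneg _)
        _ = ‖x‖ * ‖w*x‖^(k+1) * ‖((a - a*w*d*w*a)*w)^(k+1)‖ := by ring
    have := sub_eq_zero.mp hvz
    exact this.symm
  have hfixL : a * (w * (d * (w * x))) = x := by
    simpa only [mul_assoc] using hfix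
  -- now the three core-inverse conditions
  have hyE : x * (w * (d * w)) = d * (w * (d * w)) := by
    conv_lhs => rw [← hBEE]
    rw [hyc]
  have hyEc : ∀ t : A, x * (w * (d * (w * t))) = d * (w * (d * (w * t))) := by
    intro t
    have := congrArg (· * t) hyE; simp only [mul_assoc] at this; exact this
  have g3c : ∀ t : A, x * (w * (a * (w * (a * (w * (a * (w * (d * (w * t)))))))))
      = a * (w * (a * (w * (d * (w * t))))) := by
    intro t
    rw [d1c, d1c, hyc, ← d1c, ← d1c]
  refine ⟨?_, ?_, ?_⟩
  · -- d (w z'')^2 = z''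
    simp only [pow_two, mul_assoc]
    conv_lhs => enter [2,2,2,2,2,2,2,2,2,2,2,2]; rw [← hfixL]
    rw [g3c, ← d1c, ← d1c, ← d1c, ← d1c, hBEEc, hfixL]
  · -- star condition
    have harg : w * d * w * ((a * w) ^ 2 * x) = w * a * w * x := by
      simp only [pow_two, mul_assoc]
      rw [← d1c, ← d1c, hfixL]
    rw [harg]; exact hx2
  · -- z'' w (dw)^2 = dw
    simp only [pow_two, mul_assoc]
    rw [hyEc, hBEEc, hBEE]

private lemma wCoreInv_unique {A : Type*} [NormedRing A] [StarRing A] {w d z z' : A}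
    (hz : IsWCoreInv w d z) (hz' : IsWCoreInv w d z') : z = z' := by
  obtain ⟨h1, h2, h3⟩ := hz
  obtain ⟨h1', h2', h3'⟩ := hz'
  simp only [pow_two, mul_assoc] at h1 h2 h3 h1' h2' h3'
  -- h1 : d * (w * (z * (w * z))) = z ; h3 : z * (w * (d * (w * (d * w)))) = d * w
  have e1c : ∀ t : A, d * (w * (z * (w * (z * t)))) = z * t := by
    intro t; have := congrArg (· * t) h1; simp only [mul_assoc] at this; exact this
  have e3c : ∀ t : A, z * (w * (d * (w * (d * (w * t))))) = d * (w * t) := by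
    intro t; have := congrArg (· * t) h3; simp only [mul_assoc] at this; exact this
  have e3c' : ∀ t : A, z' * (w * (d * (w * (d * (w * t))))) = d * (w * t) := by
    intro t; have := congrArg (· * t) h3'; simp only [mul_assoc] at this; exact this
  -- s3 : z w d w z' = z'
  have s3 : z * (w * (d * (w * z'))) = z' := by
    conv_lhs => rw [← h1']
    rw [e3c, h1']
  have s3' : z' * (w * (d * (w * z))) = z := by
    conv_lhs => rw [← h1]
    rw [e3c', h1]
  have s3'' : z' * (w * (d * (w * z'))) = z' := by
    conv_lhs => enter [2,2,2,2]; rw [← h1']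
    rw [e3c', h1']
  have s4 : (w * (d * (w * z))) * (w * (d * (w * z'))) = w * (d * (w * z')) := by
    simp only [mul_assoc]; rw [s3]
  have s4' : (w * (d * (w * z'))) * (w * (d * (w * z))) = w * (d * (w * z)) := by
    simp only [mul_assoc]; rw [s3']
  have s5 : w * (d * (w * z)) = w * (d * (w * z')) := by
    calc w * (d * (w * z)) = star (w * (d * (w * z))) := h2.symm
    _ = star ((w * (d * (w * z'))) * (w * (d * (w * z)))) := by rw [s4']
    _ = star (w * (d * (w * z))) * star (w * (d * (w * z'))) := by rw [star_mul]
    _ = (w * (d * (w * z))) * (w * (d * (w * z'))) := by rw [h2, h2']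
    _ = w * (d * (w * z')) := s4
  calc z = z' * (w * (d * (w * z))) := s3'.symm
  _ = z' * (w * (d * (w * z'))) := by rw [s5]
  _ = z' := s3''

private lemma L_yBE {A : Type*} [Ring A] {B E Z : A}
    (hBE : B * E = E * B) (hEBE : E * (B * E) = E) (hZEE : Z * (E * E) = E) :
    E * (E * Z) * (B * E) = E := by
  have hEEB : E * (E * B) = E := by rw [← hBE]; exact hEBE
  have hBEidem : B * E * (B * E) = B * E := by rw [mul_assoc, hEBE]
  have hEBB : E * (B * B) = B * (B * E) := by rw [← mul_assoc, ← hBE, mul_assoc, ← hBE]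
  have hBE4 : E * (E * (B * B)) = B * E := by rw [hEBB, ← mul_assoc, ← hBE, hBEidem]
  have hZEEc : ∀ t : A, Z * (E * (E * t)) = E * t := by
    intro t; have := congrArg (· * t) hZEE; simp only [mul_assoc] at this; exact this
  have hEEBc : ∀ t : A, E * (E * (B * t)) = E * t := by
    intro t; have := congrArg (· * t) hEEB; simp only [mul_assoc] at this; exact this
  simp only [mul_assoc]
  rw [← hBE4, hZEEc, hEEBc, hEEB]

private lemma L_coreTendsto {A : Type*} [NormedRing A] {B E y Q : A}
    (hBE : B * E = E * B) (hEBE : E * (B * E) = E) (hyBE : y * (B * E) = E)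
    (hQdef : Q = B - B * (E * B))
    (hQten : Tendsto (fun n : ℕ => ‖Q ^ n‖ ^ (1 / (n : ℝ))) atTop (nhds 0)) :
    Tendsto (fun n : ℕ => ‖B ^ n - y * B ^ (n + 1)‖ ^ (1 / (n : ℝ))) atTop (nhds 0) := by
  have hc : Commute B E := hBE
  have hcQB : Commute Q B := by
    show Q * B = B * Q
    have h1 : (E * B) * B = B * (E * B) := by rw [← hBE, mul_assoc, ← hBE]
    rw [hQdef, sub_mul, mul_sub, mul_assoc, h1]
  have hQE : Q * E = 0 := by
    rw [hQdef, sub_mul, mul_assoc B (E*B) E, mul_assoc E B E, hEBE, sub_self]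
  have hQmE : ∀ k : ℕ, Q ^ (k+1) * E = 0 := by
    intro k; rw [pow_succ, mul_assoc, hQE, mul_zero]
  have hBsplit : B = Q + B * (E * B) := by rw [hQdef, sub_add_cancel]
  have hQkB : ∀ k : ℕ, Q ^ (k+1) * B = Q ^ (k+1+1) := by
    intro k
    have h2 : Q ^ (k+1) * (B * (E * B)) = 0 := by
      rw [← mul_assoc, (hcQB.pow_left (k+1)).eq, mul_assoc,
        ← mul_assoc (Q ^ (k+1)) E B, hQmE, zero_mul, mul_zero]
    conv_lhs => rw [hBsplit]
    rw [mul_add, h2, add_zero, ← pow_succ]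
  have hP : ∀ k : ℕ, B ^ (k+1) = B ^ (k+1+1) * E + Q ^ (k+1) := by
    intro k
    induction k with
    | zero =>
      show B ^ 1 = B ^ 2 * E + Q ^ 1
      rw [pow_one, pow_one, pow_two, hQdef, mul_assoc, hBE]
      abel
    | succ k ih =>
      rw [pow_succ B (k+1), ih, add_mul, hQkB k, mul_assoc, ← hBE, ← mul_assoc, ← pow_succ]
  have hstep : ∀ k : ℕ, B ^ (k+1) - y * B ^ (k+1+1) = Q ^ (k+1) - y * (Q * Q ^ (k+1)) := by
    intro k
    have hkey : y * (B ^ (k+1+1+1) * E) = B ^ (k+1+1) * E := by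
      have h5 : B ^ (k+1+1+1) * E = B * E * B ^ (k+1+1) := by
        rw [pow_succ' B (k+1+1), mul_assoc, mul_assoc, (hc.symm.pow_right (k+1+1)).eq]
      rw [h5, ← mul_assoc, hyBE, (hc.symm.pow_right (k+1+1)).eq]
    rw [hP (k+1), hP k, mul_add, hkey, pow_succ' Q (k+1)]
    abel
  have hbound : ∀ᶠ n : ℕ in atTop, ‖Q ^ n - y * (Q * Q ^ n)‖ ≤ (1 + ‖y * Q‖) * ‖Q ^ n‖ := by
    filter_upwards with n
    calc ‖Q ^ n - y * (Q * Q ^ n)‖ ≤ ‖Q ^ n‖ + ‖y * (Q * Q ^ n)‖ := norm_sub_le _ _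
    _ = ‖Q ^ n‖ + ‖(y * Q) * Q ^ n‖ := by rw [mul_assoc]
    _ ≤ ‖Q ^ n‖ + ‖y * Q‖ * ‖Q ^ n‖ := add_le_add_right (norm_mul_le _ _) _
    _ = (1 + ‖y * Q‖) * ‖Q ^ n‖ := by ring
  have h6 := tendsto_rpow_of_norm_le hQten hbound
  refine Filter.Tendsto.congr' ?_ h6
  filter_upwards [eventually_ge_atTop 1] with n hn
  obtain ⟨k, rfl⟩ : ∃ k, n = k + 1 := ⟨n - 1, by omega⟩
  rw [hstep k]

private lemma auxA {A : Type*} [NormedRing A] [StarRing A] {w a d z : A}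
    (hd : IsWGDrazinInv w a d) (hz : IsWCoreInv w d z) :
    IsWCoreEPInv w a ((d * w) ^ 2 * z) := by
  obtain ⟨hd1, hd2, hd3⟩ := hd
  obtain ⟨hz1, hz2, hz3⟩ := hz
  have d1c : ∀ t : A, a * (w * (d * t)) = d * (w * (a * t)) := by
    intro t; have := congrArg (· * t) hd1; simp only [mul_assoc] at this; exact this
  have d2c : ∀ t : A, d * (w * (a * (w * (d * t)))) = d * t := by
    intro t; have := congrArg (· * t) hd2; simp only [mul_assoc] at this; exact this
  have z3 : z * (w * (d * (w * (d * w)))) = d * w := by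
    simpa only [pow_two, mul_assoc] using hz3
  have z3c : ∀ t : A, z * (w * (d * (w * (d * (w * t))))) = d * (w * t) := by
    intro t; have := congrArg (· * t) z3; simp only [mul_assoc] at this; exact this
  have z2 : star (w * (d * (w * z))) = w * (d * (w * z)) := by
    simpa only [mul_assoc] using hz2
  have hBEEc : ∀ t : A, a * (w * (d * (w * (d * (w * t))))) = d * (w * t) := by
    intro t; rw [d1c, d2c]
  have hBE : (a * w) * (d * w) = (d * w) * (a * w) := by
    have := congrArg (· * w) hd1; simp only [mul_assoc] at this
    simp only [mul_assoc]; exact this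
  have hEBE : (d * w) * ((a * w) * (d * w)) = d * w := by
    have := congrArg (· * w) hd2; simp only [mul_assoc] at this
    simp only [mul_assoc]; exact this
  have hZEE : (z * w) * ((d * w) * (d * w)) = d * w := by
    simp only [mul_assoc]; exact z3
  refine ⟨?_, ?_, ?_⟩
  · simp only [pow_two, mul_assoc]
    rw [z3c, hBEEc]
  · have harg : w * a * w * ((d * w) ^ 2 * z) = w * (d * (w * z)) := by
      simp only [pow_two, mul_assoc]
      rw [hBEEc]
    rw [harg]; exact z2
  · have hyBE : ((d * w) ^ 2 * z * w) * ((a * w) * (d * w)) = d * w := by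
      have hfold : (d * w) ^ 2 * z * w = (d * w) * ((d * w) * (z * w)) := by noncomm_ring
      rw [hfold]
      exact L_yBE hBE hEBE hZEE
    have hQdef : (a - a * w * d * w * a) * w = a * w - (a * w) * ((d * w) * (a * w)) := by
      noncomm_ring
    exact L_coreTendsto (Q := (a - a * w * d * w * a) * w) hBE hEBE hyBE hQdef hd3

private lemma auxD {A : Type*} [NormedRing A] [StarRing A] [CompleteSpace A] {w a x : A}
    (hx : IsWCoreEPInv w a x) : ∃ d, IsWGDrazinInv w a d := by
  obtain ⟨hx1, hx2, hr⟩ := hx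
  have hx1c : ∀ t : A, a * (w * (x * (w * (x * t)))) = x * t := by
    intro t
    have h0 : a * (w * (x * (w * x))) = x := by simpa only [pow_two, mul_assoc] using hx1
    have := congrArg (· * t) h0; simp only [mul_assoc] at this; exact this
  have hBy2 : ∀ t : A, (a * w) * ((x * w) * ((x * w) * t)) = (x * w) * t := by
    intro t; simp only [mul_assoc]; exact hx1c (w * t)
  have f2 : ∀ k : ℕ, (a * w) ^ k * (x * w) ^ (k + 1) = x * w := by
    intro k
    induction k with
    | zero => simp
    | succ k ih =>
      rw [pow_succ (a*w) k, pow_succ' (x*w) (k+1), pow_succ' (x*w) k,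
        mul_assoc ((a*w)^k) (a*w) _, hBy2 ((x*w)^k), ← pow_succ' (x*w) k]
      exact ih
  have key : ∀ p q : ℕ, (a*w)^(p+1) * (x*w)^(p+1+q+1) = (x*w)^(q+1) := by
    intro p q
    have e : (x*w)^(p+1+q+1) = (x*w)^(p+1+1) * (x*w)^q := by
      rw [← pow_add]; congr 1; omega
    rw [e, ← mul_assoc, f2 (p+1), ← pow_succ']
  set D : ℕ → A := fun m => (x*w)^(m+2) * (a*w)^m * a with hD
  have hdiff : ∀ m : ℕ, D m - D (m+1) = (x*w)^(m+2) * ((a*w)^m - x*w*(a*w)^(m+1)) * a := by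
    intro m
    simp only [hD]
    have e1 : (x*w)^(m+1+2) = (x*w)^(m+2) * (x*w) := by rw [← pow_succ]
    rw [e1]
    noncomm_ring
  have hcauchy : CauchySeq D := by
    refine cauchySeq_of_dist_le_of_summable
      (fun m => ‖x*w‖^2 * ‖a‖ * (‖x*w‖^m * ‖(a*w)^m - x*w*(a*w)^(m+1)‖)) (fun m => ?_)
      ((summable_pow_mul_norm hr (norm_nonneg (x*w))).mul_left (‖x*w‖^2 * ‖a‖))
    rw [dist_eq_norm, hdiff m]
    calc ‖(x*w)^(m+2) * ((a*w)^m - x*w*(a*w)^(m+1)) * a‖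
        ≤ ‖(x*w)^(m+2) * ((a*w)^m - x*w*(a*w)^(m+1))‖ * ‖a‖ := norm_mul_le _ _
      _ ≤ ‖(x*w)^(m+2)‖ * ‖(a*w)^m - x*w*(a*w)^(m+1)‖ * ‖a‖ :=
          mul_le_mul_of_nonneg_right (norm_mul_le _ _) (norm_nonneg _)
      _ ≤ ‖x*w‖^(m+2) * ‖(a*w)^m - x*w*(a*w)^(m+1)‖ * ‖a‖ := by
          have := norm_pow_le' (x*w) (n := m+2) (by omega)
          exact mul_le_mul_of_nonneg_right
            (mul_le_mul_of_nonneg_right this (norm_nonneg _)) (norm_nonneg _)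
      _ = ‖x*w‖^2 * ‖a‖ * (‖x*w‖^m * ‖(a*w)^m - x*w*(a*w)^(m+1)‖) := by
          rw [show m+2 = m+2 from rfl, pow_add]
          ring
  obtain ⟨d, hdlim⟩ := cauchySeq_tendsto_of_complete hcauchy
  -- G1
  have hG1 : a * w * d = d * w * a := by
    have hrel : ∀ m, D m * w * a = a * w * D (m+1) := by
      intro m
      simp only [hD]
      have h1 : (a*w)*(x*w)^(m+1+2) = (x*w)^(m+2) := by
        have e : (x*w)^(m+1+2) = (x*w)*((x*w)*(x*w)^(m+1)) := by
          rw [← pow_succ' (x*w) (m+1), ← pow_succ' (x*w) (m+2)]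
        rw [e, hBy2 ((x*w)^(m+1)), ← pow_succ' (x*w) (m+1)]
      calc (x*w)^(m+2)*(a*w)^m*a*w*a
          = ((a*w)*(x*w)^(m+1+2))*(a*w)^m*a*w*a := by rw [h1]
        _ = a*w*((x*w)^(m+1+2)*((a*w)^m*(a*w))*a) := by noncomm_ring
        _ = a*w*((x*w)^(m+1+2)*(a*w)^(m+1)*a) := by rw [← pow_succ]
    have t1 : Tendsto (fun m => D m * w * a) atTop (nhds (d*w*a)) :=
      (hdlim.mul_const w).mul_const a
    have t2 : Tendsto (fun m => a*w*D (m+1)) atTop (nhds (a*w*d)) :=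
      (hdlim.comp (tendsto_add_atTop_nat 1)).const_mul (a*w)
    exact tendsto_nhds_unique (t2.congr (fun m => (hrel m).symm)) t1
  -- G2
  have hG2 : d * w * a * w * d = d := by
    have hDD : ∀ k m : ℕ, D k * w * a * w * D (m+(k+1)) = D (m+(k+1)) := by
      intro k m
      have e0 : D k * w * a * w = (x*w)^(k+2) * (a*w)^(k+1+1) := by
        simp only [hD]
        calc (x*w)^(k+2)*(a*w)^k*a*w*a*w
            = (x*w)^(k+2)*(((a*w)^k*(a*w))*(a*w)) := by noncomm_ring
          _ = (x*w)^(k+2)*((a*w)^(k+1)*(a*w)) := by rw [← pow_succ]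
          _ = (x*w)^(k+2)*(a*w)^(k+1+1) := by rw [← pow_succ]
        
      rw [e0]
      simp only [hD]
      have e1 : (x*w)^(m+(k+1)+2) = (x*w)^(k+1+1+m+1) := by congr 1; omega
      calc ((x*w)^(k+2)*(a*w)^(k+1+1))*((x*w)^(m+(k+1)+2)*(a*w)^(m+(k+1))*a)
          = (x*w)^(k+2)*(((a*w)^(k+1+1)*(x*w)^(m+(k+1)+2))*((a*w)^(m+(k+1))*a)) := by
            noncomm_ring
        _ = (x*w)^(k+2)*(((a*w)^(k+1+1)*(x*w)^(k+1+1+m+1))*((a*w)^(m+(k+1))*a)) := by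
            rw [e1]
        _ = (x*w)^(k+2)*((x*w)^(m+1)*((a*w)^(m+(k+1))*a)) := by rw [key (k+1) m]
        _ = ((x*w)^(k+2)*(x*w)^(m+1))*((a*w)^(m+(k+1))*a) := by rw [← mul_assoc]
        _ = (x*w)^(m+(k+1)+2)*((a*w)^(m+(k+1))*a) := by
            rw [← pow_add]
            have e2 : k+2+(m+1) = m+(k+1)+2 := by omega
            rw [e2]
        _ = (x*w)^(m+(k+1)+2)*(a*w)^(m+(k+1))*a := by rw [mul_assoc]
    have step2 : ∀ k, D k * w * a * w * d = d := by
      intro k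
      have tB : Tendsto (fun m => D (m+(k+1))) atTop (nhds d) :=
        hdlim.comp (tendsto_add_atTop_nat (k+1))
      have tA : Tendsto (fun m => D k * w * a * w * D (m+(k+1))) atTop
          (nhds (D k * w * a * w * d)) := tB.const_mul (D k * w * a * w)
      exact tendsto_nhds_unique (tA.congr (fun m => hDD k m)) tB
    have t3 : Tendsto (fun k => D k * w * a * w * d) atTop (nhds (d*w*a*w*d)) :=
      ((((hdlim.mul_const w).mul_const a).mul_const w).mul_const d)
    have t4 : Tendsto (fun k => D k * w * a * w * d) atTop (nhds d) :=
      tendsto_const_nhds.congr (fun k => (step2 k).symm)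
    exact tendsto_nhds_unique t3 t4
  refine ⟨d, hG1, hG2, ?_⟩
  -- G3 : quasinilpotence
  show Tendsto (fun n : ℕ => ‖((a - a*w*d*w*a) * w) ^ n‖ ^ (1 / (n : ℝ))) atTop (nhds 0)
  have hBE : (a*w)*(d*w) = (d*w)*(a*w) := by
    have := congrArg (· * w) hG1; simp only [mul_assoc] at this
    simp only [mul_assoc]; exact this
  have hEBE : (d*w)*((a*w)*(d*w)) = d*w := by
    have := congrArg (· * w) hG2; simp only [mul_assoc] at this
    simp only [mul_assoc]; exact this
  have hQdef : (a - a*w*d*w*a) * w = (a*w) - (a*w)*((d*w)*(a*w)) := by noncomm_ring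
  have e2 := L_pow hBE hEBE hQdef
  rw [Metric.tendsto_atTop]
  intro ε hε
  set δ : ℝ := min (ε/4) (1/(2*(‖x*w‖+1))) with hδdef
  have hδpos : 0 < δ := lt_min (by linarith) (by positivity)
  have hδ2 : ‖x*w‖*δ ≤ 1/2 := by
    calc ‖x*w‖*δ ≤ ‖x*w‖*(1/(2*(‖x*w‖+1))) :=
        mul_le_mul_of_nonneg_left (min_le_right _ _) (norm_nonneg _)
    _ ≤ 1/2 := by
        rw [mul_one_div, div_le_div_iff₀ (by positivity) (by norm_num)]
        linarith [norm_nonneg (x*w)]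
  obtain ⟨N0, hN0⟩ := eventually_atTop.mp (eventually_norm_le_pow hr hδpos)
  refine ⟨max N0 1, fun n hn => ?_⟩
  have hn0 : N0 ≤ n := le_trans (le_max_left _ _) hn
  have hn1 : 1 ≤ n := le_trans (le_max_right _ _) hn
  obtain ⟨m, rfl⟩ : ∃ m, n = m + 1 := ⟨n - 1, by omega⟩
  -- bound ‖T j‖ ≤ δ^(m+1) * geom sum
  have hTb : ∀ j : ℕ, ‖(a*w)^(m+1) - (x*w)^(j+1)*(a*w)^(m+1+j+1)‖
      ≤ δ^(m+1) * ∑ i ∈ Finset.range (j+1), (1/2:ℝ)^i := by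
    intro j
    induction j with
    | zero =>
      rw [Finset.sum_range_one, pow_zero, mul_one]
      have e3 : (x*w)^(0+1)*(a*w)^(m+1+0+1) = x*w*(a*w)^(m+1+1) := by norm_num
      rw [e3]
      exact hN0 (m+1) (by omega)
    | succ j ih =>
      have e4 : (x*w)^(j+1)*(x*w*(a*w)^(m+1+j+1+1)) = (x*w)^(j+1+1)*(a*w)^(m+1+(j+1)+1) := by
        rw [← mul_assoc, ← pow_succ]
        have e5 : m+1+j+1+1 = m+1+(j+1)+1 := by omega
        rw [e5]
      have hdiffT : (a*w)^(m+1) - (x*w)^(j+1+1)*(a*w)^(m+1+(j+1)+1)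
          = ((a*w)^(m+1) - (x*w)^(j+1)*(a*w)^(m+1+j+1))
            + (x*w)^(j+1)*((a*w)^(m+1+j+1) - x*w*(a*w)^(m+1+j+1+1)) := by
        rw [mul_sub, e4]; abel
      rw [hdiffT]
      calc ‖_ + _‖ ≤ ‖(a*w)^(m+1) - (x*w)^(j+1)*(a*w)^(m+1+j+1)‖
            + ‖(x*w)^(j+1)*((a*w)^(m+1+j+1) - x*w*(a*w)^(m+1+j+1+1))‖ := norm_add_le _ _
        _ ≤ δ^(m+1) * ∑ i ∈ Finset.range (j+1), (1/2:ℝ)^i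
            + ‖x*w‖^(j+1) * δ^(m+1+j+1) := by
            refine add_le_add ih ?_
            calc ‖(x*w)^(j+1)*((a*w)^(m+1+j+1) - x*w*(a*w)^(m+1+j+1+1))‖
                ≤ ‖(x*w)^(j+1)‖ * ‖(a*w)^(m+1+j+1) - x*w*(a*w)^(m+1+j+1+1)‖ := norm_mul_le _ _
              _ ≤ ‖x*w‖^(j+1) * δ^(m+1+j+1) := by
                  exact mul_le_mul (norm_pow_le' _ (by omega)) (hN0 _ (by omega))
                    (norm_nonneg _) (pow_nonneg (norm_nonneg _) _)
        _ ≤ δ^(m+1) * ∑ i ∈ Finset.range (j+1), (1/2:ℝ)^i + δ^(m+1) * (1/2)^(j+1) := by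
            have e6 : ‖x*w‖^(j+1) * δ^(m+1+j+1) = δ^(m+1) * (‖x*w‖*δ)^(j+1) := by
              have e7 : m+1+j+1 = (m+1)+(j+1) := by omega
              rw [e7, pow_add, mul_pow]
              ring
            rw [e6]
            exact add_le_add_right (mul_le_mul_of_nonneg_left
              (pow_le_pow_left₀ (by positivity) hδ2 _) (pow_nonneg hδpos.le _)) _
        _ = δ^(m+1) * (∑ i ∈ Finset.range (j+1), (1/2:ℝ)^i + (1/2)^(j+1)) := by ring
        _ = δ^(m+1) * ∑ i ∈ Finset.range (j+1+1), (1/2:ℝ)^i := by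
            rw [← Finset.sum_range_succ]
  have hTb2 : ∀ j : ℕ, ‖(a*w)^(m+1) - (x*w)^(j+1)*(a*w)^(m+1+j+1)‖ ≤ 2*δ^(m+1) := by
    intro j
    refine (hTb j).trans ?_
    calc δ^(m+1) * ∑ i ∈ Finset.range (j+1), (1/2:ℝ)^i ≤ δ^(m+1) * 2 :=
        mul_le_mul_of_nonneg_left (sum_geometric_two_le _) (pow_nonneg hδpos.le _)
      _ = 2*δ^(m+1) := mul_comm _ _
  -- Q^(m+1) as a limit of the T's
  have hQn : ((a - a*w*d*w*a)*w)^(m+1) = (a*w)^(m+1) - (a*w)^(m+1+1)*(d*w) := by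
    rw [e2 m]; abel
  have hBD : ∀ j : ℕ, (a*w)^(m+1+1)*(D (j+(m+1+1))*w) = (x*w)^(j+1+1)*(a*w)^(m+1+(j+1)+1) := by
    intro j
    simp only [hD]
    have e8 : (x*w)^(j+(m+1+1)+2) = (x*w)^(m+1+1+(j+1)+1) := by congr 1; omega
    have e9 : (a*w)^(j+(m+1+1))*(a*w) = (a*w)^(m+1+(j+1)+1) := by
      rw [← pow_succ]; congr 1; omega
    calc (a*w)^(m+1+1)*((x*w)^(j+(m+1+1)+2)*(a*w)^(j+(m+1+1))*a*w)
        = ((a*w)^(m+1+1)*(x*w)^(j+(m+1+1)+2))*((a*w)^(j+(m+1+1))*(a*w)) := by noncomm_ring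
      _ = ((a*w)^(m+1+1)*(x*w)^(m+1+1+(j+1)+1))*((a*w)^(j+(m+1+1))*(a*w)) := by rw [e8]
      _ = (x*w)^(j+1+1)*((a*w)^(j+(m+1+1))*(a*w)) := by rw [key (m+1) (j+1)]
      _ = (x*w)^(j+1+1)*(a*w)^(m+1+(j+1)+1) := by rw [e9]
  have hE : Tendsto (fun j => (a*w)^(m+1+1)*(D (j+(m+1+1))*w)) atTop
      (nhds ((a*w)^(m+1+1)*(d*w))) :=
    ((hdlim.comp (tendsto_add_atTop_nat (m+1+1))).mul_const w).const_mul ((a*w)^(m+1+1))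
  have hTten : Tendsto (fun j => (a*w)^(m+1) - (x*w)^(j+1+1)*(a*w)^(m+1+(j+1)+1)) atTop
      (nhds (((a - a*w*d*w*a)*w)^(m+1))) := by
    rw [hQn]
    exact tendsto_const_nhds.sub (hE.congr (fun j => hBD j))
  have hQb : ‖((a - a*w*d*w*a)*w)^(m+1)‖ ≤ 2*δ^(m+1) :=
    le_of_tendsto hTten.norm (Filter.Eventually.of_forall (fun j => hTb2 (j+1)))
  -- conclude
  rw [Real.dist_eq, sub_zero, abs_of_nonneg (Real.rpow_nonneg (norm_nonneg _) _)]
  have hn0' : (0:ℝ) < ((m+1 : ℕ) : ℝ) := by positivity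
  have h1n : (0:ℝ) ≤ 1 / ((m+1 : ℕ) : ℝ) := by positivity
  calc ‖((a - a*w*d*w*a)*w)^(m+1)‖ ^ (1/((m+1:ℕ):ℝ))
      ≤ (2*δ^(m+1)) ^ (1/((m+1:ℕ):ℝ)) :=
        Real.rpow_le_rpow (norm_nonneg _) hQb h1n
    _ = 2 ^ (1/((m+1:ℕ):ℝ)) * δ := by
        rw [Real.mul_rpow (by norm_num) (pow_nonneg hδpos.le _)]
        congr 1
        rw [← Real.rpow_natCast δ (m+1), ← Real.rpow_mul hδpos.le,
          mul_one_div_cancel hn0'.ne', Real.rpow_one]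
    _ ≤ 2 * δ := by
        have h2 : (2:ℝ) ^ (1/((m+1:ℕ):ℝ)) ≤ 2 ^ (1:ℝ) := by
          apply Real.rpow_le_rpow_of_exponent_le (by norm_num)
          rw [div_le_one hn0']
          exact_mod_cast hn1
        rw [Real.rpow_one] at h2
        exact mul_le_mul_of_nonneg_right h2 hδpos.le
    _ ≤ 2 * (ε/4) := mul_le_mul_of_nonneg_left (min_le_left _ _) (by norm_num)
    _ < ε := by linarith

/-- Theorem 4.2. -/
theorem isWCoreEPInv_exists_iff_gDrazin_wCore (w a : A) :
    ((∃ x, IsWCoreEPInv w a x) ↔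
      ∃ d, IsWGDrazinInv w a d ∧ ∃ z, IsWCoreInv w d z) ∧
    (∀ d z : A, IsWGDrazinInv w a d → IsWCoreInv w d z →
      IsWCoreEPInv w a ((d * w) ^ 2 * z) ∧
        ∀ x : A, IsWCoreEPInv w a x → z = (a * w) ^ 2 * x) := by
  constructor
  · constructor
    · rintro ⟨x, hx⟩
      obtain ⟨d, hd⟩ := auxD hx
      exact ⟨d, hd, (a * w) ^ 2 * x, auxB hd hx⟩
    · rintro ⟨d, hd, z, hz⟩
      exact ⟨(d * w) ^ 2 * z, auxA hd hz⟩
  · intro d z hd hz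
    exact ⟨auxA hd hz, fun x hx => wCoreInv_unique hz (auxB hd hx)⟩
end
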